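/- arXiv:1705.01193 — 4 statements merged into one kernel-verified Lean document; each statement's English description precedes it below -/
import Mathlib

section
/- Assume V = (a,b) with ν the Lebesgue measure, a > 0, and p + q < 1. Then for every t ≥ a⁻¹ and every f ∈ L¹(Ω,μ) with boundary extension f̃, ∫_Ω |f̃(x − tv, v)| μ(d(x,v)) ≤ (p+q)^{⌊ta⌋} · ‖f‖_{L¹(Ω)}, where ⌊ta⌋ is the largest integer less than or equal to ta. -/
open MeasureTheory Set Filter Topology
open scoped ENNReal

/-- The measure `ℓ(·,v)` on `V` given by
`ℓ(dw,v) = p w v⁻¹ k(w,v) ν(dw) + q δ_v(dw)`. -/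
noncomputable def ell (p q : ℝ) (k : ℝ → ℝ → ℝ) (ν : Measure ℝ) (V : Set ℝ) (v : ℝ) :
    Measure ℝ :=
  (ν.restrict V).withDensity (fun w => ENNReal.ofReal (p * w * v⁻¹ * k w v)) +
    (ENNReal.ofReal q) • Measure.dirac v

/-- The sets `Ω₀ = Ω = (0,1) × V` and, for `i ≥ 1`,
`Ω_i = {(x,v) : v ∈ V, −i v b⁻¹ < x ≤ −(i−1) v b⁻¹}`. -/
def Omi (b : ℝ) (V : Set ℝ) : ℕ → Set (ℝ × ℝ)
  | 0 => (Set.Ioo (0 : ℝ) 1) ×ˢ V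
  | (i + 1) =>
      {z : ℝ × ℝ | z.2 ∈ V ∧ -(((i : ℝ) + 1) * z.2 * b⁻¹) < z.1 ∧
        z.1 ≤ -((i : ℝ) * z.2 * b⁻¹)}

/-- `Γ_j = ⋃_{i=0}^{j} Ω_i`. -/
def Gam (b : ℝ) (V : Set ℝ) (j : ℕ) : Set (ℝ × ℝ) :=
  ⋃ i ∈ Finset.range (j + 1), Omi b V i

/-- A measurable function `f̃ : Ω̃ → ℝ` (modelled on all of `ℝ × ℝ`, with
`Ω̃ = (−∞,1) × V`), μ-integrable on each `Γ_j`, is a boundary extension of `f` if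
`f̃ = f` a.e. on `{x > 0}` and, a.e. on `{x ≤ 0}`, the function
`w ↦ f̃(1 + x w v⁻¹, w)` is `ℓ(·,v)`-integrable with
`f̃(x,v) = ∫_V f̃(1 + x w v⁻¹, w) ℓ(dw,v)`. -/
def IsBoundaryExtension (b p q : ℝ) (k : ℝ → ℝ → ℝ) (ν : Measure ℝ) (V : Set ℝ)
    (f ftil : ℝ × ℝ → ℝ) : Prop :=
  Measurable ftil ∧
  (∀ j : ℕ, IntegrableOn ftil (Gam b V j) ((volume : Measure ℝ).prod ν)) ∧
  (∀ᵐ z ∂(((volume : Measure ℝ).prod ν).restrict ((Set.Iio (1 : ℝ)) ×ˢ V)),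
    0 < z.1 → ftil z = f z) ∧
  (∀ᵐ z ∂(((volume : Measure ℝ).prod ν).restrict ((Set.Iio (1 : ℝ)) ×ˢ V)),
    z.1 ≤ 0 →
      Integrable (fun w => ftil (1 + z.1 * w * z.2⁻¹, w)) (ell p q k ν V z.2) ∧
      ftil z = ∫ w, ftil (1 + z.1 * w * z.2⁻¹, w) ∂(ell p q k ν V z.2))

namespace Stmt12Aux

lemma lint_scale (h : ℝ → ℝ≥0∞) {c : ℝ} (hc : c ≠ 0) :
    ∫⁻ x, h (c * x) = ENNReal.ofReal |c⁻¹| * ∫⁻ x, h x := by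
  have : (fun x => h (c * x)) = fun x => h ((Homeomorph.mulLeft₀ c hc).toMeasurableEquiv x) := rfl
  rw [this, ← lintegral_map_equiv]
  have hmap : Measure.map (Homeomorph.mulLeft₀ c hc).toMeasurableEquiv (volume : Measure ℝ)
      = ENNReal.ofReal |c⁻¹| • volume := by
    rw [show ((Homeomorph.mulLeft₀ c hc).toMeasurableEquiv : ℝ → ℝ) = fun x => c * x from rfl]
    exact Real.map_volume_mul_left hc
  rw [hmap, lintegral_smul_measure, smul_eq_mul]

lemma lint_affine (g : ℝ → ℝ≥0∞) {c : ℝ} (hc : c ≠ 0) (d : ℝ) :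
    ∫⁻ x, g (c * x + d) = ENNReal.ofReal |c⁻¹| * ∫⁻ x, g x := by
  have h1 : (fun x => g (c * x + d)) = fun x => (fun y => g (y + d)) (c * x) := rfl
  rw [h1, lint_scale (fun y => g (y + d)) hc, lintegral_add_right_eq_self (fun y => g y) d]

lemma lint_affine' (g : ℝ → ℝ≥0∞) {c : ℝ} (hc : c ≠ 0) (d : ℝ) :
    ∫⁻ x, g x = ENNReal.ofReal |c| * ∫⁻ x, g (c * x + d) := by
  rw [lint_affine g hc d, ← mul_assoc, ← ENNReal.ofReal_mul (abs_nonneg c)]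
  rw [← abs_mul, mul_inv_cancel₀ hc]
  simp

noncomputable section

/-- product measure: Lebesgue ⊗ Lebesgue restricted to `(a,b)` in 2nd coordinate -/
def rho (a b : ℝ) : Measure (ℝ × ℝ) := (volume : Measure ℝ).prod ((volume : Measure ℝ).restrict (Set.Ioo a b))

def Ff (ftil : ℝ × ℝ → ℝ) (σ u : ℝ) : ℝ≥0∞ := ENNReal.ofReal |ftil (-(σ * u), u)|

/-- The one-step transfer operator. -/
def Top (a b p q : ℝ) (k : ℝ → ℝ → ℝ) (ψ : ℝ → ℝ → ℝ≥0∞) (σ u : ℝ) : ℝ≥0∞ :=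
  ENNReal.ofReal p * (∫⁻ w in Set.Ioo a b, ENNReal.ofReal (k u w) * ψ (σ + u⁻¹) w) +
    ENNReal.ofReal q * ψ (σ + u⁻¹) u

/-- The continuing profiles. -/
def chi (a b p q t : ℝ) (k : ℝ → ℝ → ℝ) : ℕ → ℝ → ℝ → ℝ≥0∞
  | 0 => fun σ u => if u ∈ Set.Ioo a b ∧ t - u⁻¹ < σ ∧ σ < t then 1 else 0
  | n+1 => fun σ u => if 0 ≤ σ ∧ u ∈ Set.Ioo a b then Top a b p q k (chi a b p q t k n) σ u else 0

/-- The stopped profiles (`Dd n` is the mass stopped at step `n+1`). -/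
def Dd (a b p q t : ℝ) (k : ℝ → ℝ → ℝ) (n : ℕ) : ℝ → ℝ → ℝ≥0∞ :=
  fun σ u => if σ < 0 ∧ u ∈ Set.Ioo a b then Top a b p q k (chi a b p q t k n) σ u else 0

/-- Upper envelope profiles. -/
def Hh (a b p q t : ℝ) (k : ℝ → ℝ → ℝ) : ℕ → ℝ → ℝ → ℝ≥0∞
  | 0 => chi a b p q t k 0
  | n+1 => Top a b p q k (Hh a b p q t k n)

/-- The pointwise potential. -/
def phiB (a p q t : ℝ) (σ : ℝ) : ℝ≥0∞ :=
  if σ < t then (ENNReal.ofReal (p+q)) ^ (⌈(t - σ) * a⌉₊ - 1) else 0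

def Xi (a b : ℝ) (ftil : ℝ × ℝ → ℝ) (ψ : ℝ → ℝ → ℝ≥0∞) : ℝ≥0∞ :=
  ∫⁻ z, ψ z.1 z.2 * (ENNReal.ofReal z.2 * Ff ftil z.1 z.2) ∂(rho a b)


section Meas
variable {a b p q t : ℝ} {k : ℝ → ℝ → ℝ} {ftil : ℝ × ℝ → ℝ} {ψ : ℝ → ℝ → ℝ≥0∞}

lemma Ff_meas (hftil : Measurable ftil) :
    Measurable (fun z : ℝ × ℝ => Ff ftil z.1 z.2) := by
  apply Measurable.ennreal_ofReal
  exact (hftil.comp (((measurable_fst.mul measurable_snd).neg).prodMk measurable_snd)).abs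

lemma Top_meas (hkm : Measurable (Function.uncurry k))
    (hψ : Measurable (fun z : ℝ × ℝ => ψ z.1 z.2)) :
    Measurable (fun z : ℝ × ℝ => Top a b p q k ψ z.1 z.2) := by
  unfold Top
  apply Measurable.add
  · apply Measurable.const_mul
    apply Measurable.lintegral_prod_right (f := fun (z : ℝ × ℝ) (w : ℝ) =>
      ENNReal.ofReal (k z.2 w) * ψ (z.1 + z.2⁻¹) w)
    apply Measurable.mul
    · exact (hkm.comp ((measurable_snd.comp measurable_fst).prodMk measurable_snd)).ennreal_ofReal
    · exact hψ.comp (((measurable_fst.comp measurable_fst).add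
        ((measurable_snd.comp measurable_fst).inv)).prodMk measurable_snd)
  · apply Measurable.const_mul
    exact hψ.comp ((measurable_fst.add measurable_snd.inv).prodMk measurable_snd)

lemma chi0_meas : Measurable (fun z : ℝ × ℝ => chi a b p q t k 0 z.1 z.2) := by
  have hset : MeasurableSet {z : ℝ × ℝ | z.2 ∈ Set.Ioo a b ∧ t - z.2⁻¹ < z.1 ∧ z.1 < t} := by
    apply MeasurableSet.inter
    · exact measurable_snd measurableSet_Ioo
    apply MeasurableSet.inter
    · exact measurableSet_lt (measurable_const.sub measurable_snd.inv) measurable_fst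
    · exact measurableSet_lt measurable_fst measurable_const
  show Measurable (fun z : ℝ × ℝ =>
    if z.2 ∈ Set.Ioo a b ∧ t - z.2⁻¹ < z.1 ∧ z.1 < t then (1 : ℝ≥0∞) else 0)
  exact Measurable.ite hset measurable_const measurable_const

lemma chi_meas (hkm : Measurable (Function.uncurry k)) (n : ℕ) :
    Measurable (fun z : ℝ × ℝ => chi a b p q t k n z.1 z.2) := by
  induction n with
  | zero => exact chi0_meas
  | succ n ih =>
    have hset : MeasurableSet {z : ℝ × ℝ | 0 ≤ z.1 ∧ z.2 ∈ Set.Ioo a b} :=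
      (measurableSet_le measurable_const measurable_fst).inter (measurable_snd measurableSet_Ioo)
    show Measurable (fun z : ℝ × ℝ => if 0 ≤ z.1 ∧ z.2 ∈ Set.Ioo a b then
      Top a b p q k (chi a b p q t k n) z.1 z.2 else 0)
    exact Measurable.ite hset (Top_meas hkm ih) measurable_const

lemma Dd_meas (hkm : Measurable (Function.uncurry k)) (n : ℕ) :
    Measurable (fun z : ℝ × ℝ => Dd a b p q t k n z.1 z.2) := by
  have hset : MeasurableSet {z : ℝ × ℝ | z.1 < 0 ∧ z.2 ∈ Set.Ioo a b} :=
    (measurableSet_lt measurable_fst measurable_const).inter (measurable_snd measurableSet_Ioo)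
  show Measurable (fun z : ℝ × ℝ => if z.1 < 0 ∧ z.2 ∈ Set.Ioo a b then
    Top a b p q k (chi a b p q t k n) z.1 z.2 else 0)
  exact Measurable.ite hset (Top_meas hkm (chi_meas hkm n)) measurable_const

lemma Hh_meas (hkm : Measurable (Function.uncurry k)) (n : ℕ) :
    Measurable (fun z : ℝ × ℝ => Hh a b p q t k n z.1 z.2) := by
  induction n with
  | zero => exact chi0_meas
  | succ n ih => exact Top_meas hkm ih

end Meas

section Basic
variable {a b p q t : ℝ} {k : ℝ → ℝ → ℝ} {ψ ψ₁ ψ₂ : ℝ → ℝ → ℝ≥0∞}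

lemma Top_mono (h : ∀ σ u, ψ₁ σ u ≤ ψ₂ σ u) (σ u : ℝ) :
    Top a b p q k ψ₁ σ u ≤ Top a b p q k ψ₂ σ u := by
  unfold Top
  exact add_le_add
    (mul_le_mul_right (lintegral_mono fun w => mul_le_mul_right (h _ _) _) _)
    (mul_le_mul_right (h _ _) _)

lemma meas_slice (hψ : Measurable (fun z : ℝ × ℝ => ψ z.1 z.2)) (hkm : Measurable (Function.uncurry k)) (c u : ℝ) :
    Measurable (fun w => ENNReal.ofReal (k u w) * ψ c w) := by
  apply Measurable.mul
  · exact (hkm.comp (measurable_const.prodMk measurable_id)).ennreal_ofReal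
  · exact hψ.comp (measurable_const.prodMk measurable_id)

lemma Top_add (hkm : Measurable (Function.uncurry k))
    (hψ₁ : Measurable (fun z : ℝ × ℝ => ψ₁ z.1 z.2)) (σ u : ℝ) :
    Top a b p q k (fun σ u => ψ₁ σ u + ψ₂ σ u) σ u
      = Top a b p q k ψ₁ σ u + Top a b p q k ψ₂ σ u := by
  unfold Top
  have : ∫⁻ w in Set.Ioo a b, ENNReal.ofReal (k u w) * (ψ₁ (σ + u⁻¹) w + ψ₂ (σ + u⁻¹) w)
      = (∫⁻ w in Set.Ioo a b, ENNReal.ofReal (k u w) * ψ₁ (σ + u⁻¹) w)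
        + ∫⁻ w in Set.Ioo a b, ENNReal.ofReal (k u w) * ψ₂ (σ + u⁻¹) w := by
    rw [← lintegral_add_left (meas_slice hψ₁ hkm _ u)]
    congr 1; funext w; ring
  rw [this]; ring

lemma Top_sum (hkm : Measurable (Function.uncurry k)) {Ψ : ℕ → ℝ → ℝ → ℝ≥0∞}
    (hΨ : ∀ n, Measurable (fun z : ℝ × ℝ => Ψ n z.1 z.2)) (N : ℕ) (σ u : ℝ) :
    Top a b p q k (fun σ u => ∑ n ∈ Finset.range N, Ψ n σ u) σ u
      = ∑ n ∈ Finset.range N, Top a b p q k (Ψ n) σ u := by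
  induction N with
  | zero =>
    simp only [Finset.range_zero, Finset.sum_empty]
    unfold Top; simp
  | succ N ih =>
    simp only [Finset.sum_range_succ]
    rw [← ih]
    have hsum : Measurable (fun z : ℝ × ℝ => ∑ n ∈ Finset.range N, Ψ n z.1 z.2) := by
      exact Finset.measurable_sum _ fun n _ => hΨ n
    have := Top_add (a := a) (b := b) (p := p) (q := q) hkm
      (ψ₁ := fun σ u => ∑ n ∈ Finset.range N, Ψ n σ u) (ψ₂ := Ψ N) hsum σ u
    exact this

lemma kmass (hknn : ∀ w v : ℝ, 0 ≤ k w v)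
    (hk1 : ∀ w ∈ Set.Ioo a b, ∫ v in Set.Ioo a b, k w v = 1)
    {u : ℝ} (hu : u ∈ Set.Ioo a b) :
    ∫⁻ w in Set.Ioo a b, ENNReal.ofReal (k u w) = 1 := by
  have hint : Integrable (fun w => k u w) ((volume : Measure ℝ).restrict (Set.Ioo a b)) := by
    by_contra hni
    have := integral_undef hni
    rw [hk1 u hu] at this
    norm_num at this
  rw [← ofReal_integral_eq_lintegral_ofReal hint
    (Filter.Eventually.of_forall fun w => hknn u w), hk1 u hu]
  simp

lemma Top_le_const (hp : 0 ≤ p) (hq : 0 ≤ q) (hknn : ∀ w v : ℝ, 0 ≤ k w v)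
    (hk1 : ∀ w ∈ Set.Ioo a b, ∫ v in Set.Ioo a b, k w v = 1)
    (hkm : Measurable (Function.uncurry k))
    {u σ : ℝ} (hu : u ∈ Set.Ioo a b) {c : ℝ≥0∞}
    (hψV : ∀ w ∈ Set.Ioo a b, ψ (σ + u⁻¹) w ≤ c) (hψu : ψ (σ + u⁻¹) u ≤ c) :
    Top a b p q k ψ σ u ≤ ENNReal.ofReal (p + q) * c := by
  have h1 : ∫⁻ w in Set.Ioo a b, ENNReal.ofReal (k u w) * ψ (σ + u⁻¹) w
      ≤ ∫⁻ w in Set.Ioo a b, ENNReal.ofReal (k u w) * c := by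
    apply setLIntegral_mono' measurableSet_Ioo
    exact fun w hw => mul_le_mul_right (hψV w hw) _
  have h2 : ∫⁻ w in Set.Ioo a b, ENNReal.ofReal (k u w) * c
      = (∫⁻ w in Set.Ioo a b, ENNReal.ofReal (k u w)) * c := by
    exact lintegral_mul_const c ((hkm.comp (measurable_const.prodMk measurable_id)).ennreal_ofReal)
  calc Top a b p q k ψ σ u
      ≤ ENNReal.ofReal p * ((∫⁻ w in Set.Ioo a b, ENNReal.ofReal (k u w)) * c)
        + ENNReal.ofReal q * c := by
        unfold Top
        rw [← h2]
        exact add_le_add (mul_le_mul_right h1 _) (mul_le_mul_right hψu _)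
    _ = ENNReal.ofReal (p + q) * c := by
        rw [kmass hknn hk1 hu, one_mul, ← add_mul, ENNReal.ofReal_add hp hq]
end Basic

section Pot
variable {a b p q t : ℝ} {k : ℝ → ℝ → ℝ}

lemma pq_le_one (hpq1 : p + q < 1) : ENNReal.ofReal (p + q) ≤ 1 := by
  rw [← ENNReal.ofReal_one]; exact ENNReal.ofReal_le_ofReal hpq1.le

lemma pq_pow_mono (hpq1 : p + q < 1) {m n : ℕ} (h : m ≤ n) :
    (ENNReal.ofReal (p + q)) ^ n ≤ (ENNReal.ofReal (p + q)) ^ m := by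
  obtain ⟨d, rfl⟩ := Nat.exists_eq_add_of_le h
  rw [pow_add]
  calc (ENNReal.ofReal (p+q))^m * (ENNReal.ofReal (p+q))^d
      ≤ (ENNReal.ofReal (p+q))^m * 1 := mul_le_mul_right (pow_le_one' (pq_le_one hpq1) d) _
    _ = _ := mul_one _

lemma au_le_one (ha0 : 0 < a) {u : ℝ} (hau : a < u) : a * u⁻¹ ≤ 1 := by
  have hu0 : 0 < u := ha0.trans hau
  have : a * u⁻¹ ≤ u * u⁻¹ :=
    mul_le_mul_of_nonneg_right hau.le (inv_pos.2 hu0).le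
  rwa [mul_inv_cancel₀ (ne_of_gt hu0)] at this

lemma key_ineq (hpq1 : p + q < 1) (ha0 : 0 < a) {u σ : ℝ} (hu : u ∈ Set.Ioo a b) :
    chi a b p q t k 0 σ u + ENNReal.ofReal (p + q) * phiB a p q t (σ + u⁻¹)
      ≤ phiB a p q t σ := by
  have hu0 : 0 < u := ha0.trans hu.1
  have hui : 0 < u⁻¹ := inv_pos.2 hu0
  have hau : a * u⁻¹ ≤ 1 := au_le_one ha0 hu.1
  show (if u ∈ Set.Ioo a b ∧ t - u⁻¹ < σ ∧ σ < t then (1:ℝ≥0∞) else 0) + _ ≤ _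
  by_cases hσt : σ < t
  · by_cases hw : t - u⁻¹ < σ
    · rw [if_pos ⟨hu, hw, hσt⟩]
      have h0 : phiB a p q t (σ + u⁻¹) = 0 := by
        unfold phiB; rw [if_neg]; push_neg; linarith
      have h1 : phiB a p q t σ = 1 := by
        unfold phiB
        rw [if_pos hσt]
        have hle : ⌈(t - σ) * a⌉₊ ≤ 1 := by
          apply Nat.ceil_le.2
          have h3 : (t - σ) * a ≤ u⁻¹ * a := mul_le_mul_of_nonneg_right (by linarith) ha0.le
          rw [mul_comm u⁻¹ a] at h3
          simpa using h3.trans hau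
        have : ⌈(t - σ) * a⌉₊ - 1 = 0 := by omega
        rw [this, pow_zero]
      rw [h0, h1, mul_zero, add_zero]
    · rw [if_neg (by tauto), zero_add]
      push_neg at hw
      unfold phiB
      rw [if_pos hσt]
      by_cases hc : σ + u⁻¹ < t
      · rw [if_pos hc]
        set c' := ⌈(t - (σ + u⁻¹)) * a⌉₊ with hc'def
        have hc'pos : 0 < c' := Nat.ceil_pos.2 (mul_pos (by linarith) ha0)
        have hstep : ENNReal.ofReal (p+q) * (ENNReal.ofReal (p+q))^(c' - 1)
            = (ENNReal.ofReal (p+q))^c' := by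
          rw [← pow_succ']
          congr 1
          omega
        rw [hstep]
        apply pq_pow_mono hpq1
        · -- ⌈(t-σ)*a⌉₊ - 1 ≤ c'
          have hceil : ⌈(t - σ) * a⌉₊ ≤ c' + 1 := by
            have harg : (t - σ) * a ≤ (t - (σ + u⁻¹)) * a + 1 := by nlinarith
            calc ⌈(t - σ) * a⌉₊ ≤ ⌈(t - (σ + u⁻¹)) * a + 1⌉₊ := Nat.ceil_le_ceil harg
              _ = c' + 1 := by
                  rw [Nat.ceil_add_one (mul_nonneg (by linarith) ha0.le)]
          omega
      · rw [if_neg hc, mul_zero]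
        exact zero_le
  · rw [if_neg (by tauto), zero_add]
    have h0 : phiB a p q t (σ + u⁻¹) = 0 := by
      unfold phiB; rw [if_neg]; push_neg; linarith
    rw [h0, mul_zero]
    exact zero_le

lemma sum_H_le_phiB (hp : 0 ≤ p) (hq : 0 ≤ q) (hpq1 : p + q < 1) (ha0 : 0 < a)
    (hknn : ∀ w v : ℝ, 0 ≤ k w v)
    (hk1 : ∀ w ∈ Set.Ioo a b, ∫ v in Set.Ioo a b, k w v = 1)
    (hkm : Measurable (Function.uncurry k)) (N : ℕ) :
    ∀ σ u, u ∈ Set.Ioo a b →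
      ∑ n ∈ Finset.range N, Hh a b p q t k n σ u ≤ phiB a p q t σ := by
  induction N with
  | zero => intro σ u _; simp
  | succ N ih =>
    intro σ u hu
    rw [Finset.sum_range_succ']
    have h1 : ∑ n ∈ Finset.range N, Hh a b p q t k (n + 1) σ u
        = Top a b p q k (fun σ u => ∑ n ∈ Finset.range N, Hh a b p q t k n σ u) σ u := by
      rw [Top_sum hkm (fun n => Hh_meas hkm n) N σ u]
      exact Finset.sum_congr rfl fun n _ => rfl
    rw [h1]
    have h2 : Top a b p q k (fun σ u => ∑ n ∈ Finset.range N, Hh a b p q t k n σ u) σ u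
        ≤ ENNReal.ofReal (p + q) * phiB a p q t (σ + u⁻¹) :=
      Top_le_const hp hq hknn hk1 hkm hu (fun w hw => ih _ w hw) (ih _ u hu)
    calc _ ≤ ENNReal.ofReal (p + q) * phiB a p q t (σ + u⁻¹) + Hh a b p q t k 0 σ u :=
        add_le_add h2 le_rfl
      _ = chi a b p q t k 0 σ u + ENNReal.ofReal (p + q) * phiB a p q t (σ + u⁻¹) := by
        rw [add_comm]; rfl
      _ ≤ phiB a p q t σ := key_ineq hpq1 ha0 hu

lemma chi_le_Hh (n : ℕ) (σ u : ℝ) :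
    chi a b p q t k n σ u ≤ Hh a b p q t k n σ u := by
  induction n generalizing σ u with
  | zero => exact le_rfl
  | succ n ih =>
    show (if _ then Top a b p q k (chi a b p q t k n) σ u else 0) ≤ Top a b p q k (Hh a b p q t k n) σ u
    split_ifs with h
    · exact Top_mono ih σ u
    · exact zero_le

lemma Dd_le_Hh (n : ℕ) (σ u : ℝ) :
    Dd a b p q t k n σ u ≤ Hh a b p q t k (n + 1) σ u := by
  show (if _ then Top a b p q k (chi a b p q t k n) σ u else 0) ≤ Top a b p q k (Hh a b p q t k n) σ u
  split_ifs with h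
  · exact Top_mono (chi_le_Hh n) σ u
  · exact zero_le

/-- `chi n` vanishes for negative times. -/
lemma chi_neg (ha0 : 0 < a) (htge : a⁻¹ ≤ t) (n : ℕ) (σ u : ℝ) (hσ : σ < 0) :
    chi a b p q t k n σ u = 0 := by
  cases n with
  | zero =>
    simp only [chi]
    rw [if_neg]
    rintro ⟨hu, hw, -⟩
    have hu0 : 0 < u := ha0.trans hu.1
    have h1 : u⁻¹ ≤ a⁻¹ := inv_anti₀ ha0 hu.1.le
    linarith
  | succ n =>
    simp only [chi]
    rw [if_neg]
    rintro ⟨h0, -⟩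
    linarith

/-- Applying `Top` to a profile that vanishes at negative times gives 0 when `σ + u⁻¹ < 0`. -/
lemma Top_zero_of_neg {ψ : ℝ → ℝ → ℝ≥0∞} (hψ : ∀ σ u, σ < 0 → ψ σ u = 0)
    {σ u : ℝ} (h : σ + u⁻¹ < 0) :
    Top a b p q k ψ σ u = 0 := by
  unfold Top
  have h1 : ∀ w, ENNReal.ofReal (k u w) * ψ (σ + u⁻¹) w = 0 := fun w => by
    rw [hψ _ _ h, mul_zero]
  rw [show (fun w => ENNReal.ofReal (k u w) * ψ (σ + u⁻¹) w) = fun _ => (0:ℝ≥0∞) from funext h1]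
  rw [hψ _ _ h, lintegral_zero, mul_zero, mul_zero, add_zero]

/-- `chi n` vanishes for large times.  -/
lemma chi_big (ha0 : 0 < a) (hab : a < b) (n : ℕ) (σ u : ℝ)
    (hσ : t - n * b⁻¹ < σ) : chi a b p q t k n σ u = 0 := by
  induction n generalizing σ u with
  | zero =>
    simp only [chi]
    rw [if_neg]
    rintro ⟨-, -, h2⟩
    simp at hσ
    linarith
  | succ n ih =>
    simp only [chi]
    split_ifs with hcond
    · obtain ⟨h0, hu⟩ := hcond
      have hb0 : 0 < b := ha0.trans hab
      have hu0 : 0 < u := ha0.trans hu.1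
      have hbu : b⁻¹ < u⁻¹ := by
        apply inv_strictAnti₀ hu0 hu.2
      have harg : t - n * b⁻¹ < σ + u⁻¹ := by
        push_cast
        push_cast at hσ
        nlinarith
      unfold Top
      have h1 : ∀ w, ENNReal.ofReal (k u w) * chi a b p q t k n (σ + u⁻¹) w = 0 := fun w => by
        rw [ih _ _ harg, mul_zero]
      rw [show (fun w => ENNReal.ofReal (k u w) * chi a b p q t k n (σ + u⁻¹) w)
        = fun _ => (0:ℝ≥0∞) from funext h1]
      rw [ih _ _ harg, lintegral_zero, mul_zero, mul_zero, add_zero]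
    · rfl

/-- The key pointwise bound on the total stopped mass. -/
lemma sumD_le (hp : 0 ≤ p) (hq : 0 ≤ q) (hpq1 : p + q < 1) (ha0 : 0 < a) (hab : a < b)
    (htge : a⁻¹ ≤ t)
    (hknn : ∀ w v : ℝ, 0 ≤ k w v)
    (hk1 : ∀ w ∈ Set.Ioo a b, ∫ v in Set.Ioo a b, k w v = 1)
    (hkm : Measurable (Function.uncurry k)) (N : ℕ) {σ u : ℝ} (hu : u ∈ Set.Ioo a b) :
    ∑ n ∈ Finset.range N, Dd a b p q t k n σ u
      ≤ (if -u⁻¹ ≤ σ ∧ σ < 0 then (ENNReal.ofReal (p + q)) ^ (⌊t * a⌋₊) else 0) := by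
  have hu0 : 0 < u := ha0.trans hu.1
  have hui : 0 < u⁻¹ := inv_pos.2 hu0
  have huia : u⁻¹ < a⁻¹ := inv_strictAnti₀ ha0 hu.1
  by_cases hσ0 : σ < 0
  · by_cases hlow : -u⁻¹ ≤ σ
    · rw [if_pos ⟨hlow, hσ0⟩]
      have hchain : ∑ n ∈ Finset.range N, Dd a b p q t k n σ u
          ≤ Top a b p q k (fun σ u => ∑ n ∈ Finset.range N, Hh a b p q t k n σ u) σ u := by
        rw [Top_sum hkm (fun n => Hh_meas hkm n) N σ u]
        exact Finset.sum_le_sum fun n _ => Dd_le_Hh n σ u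
      have h2 : Top a b p q k (fun σ u => ∑ n ∈ Finset.range N, Hh a b p q t k n σ u) σ u
          ≤ ENNReal.ofReal (p + q) * phiB a p q t (σ + u⁻¹) :=
        Top_le_const hp hq hknn hk1 hkm hu
          (fun w hw => sum_H_le_phiB hp hq hpq1 ha0 hknn hk1 hkm N _ w hw)
          (sum_H_le_phiB hp hq hpq1 ha0 hknn hk1 hkm N _ u hu)
      refine hchain.trans (h2.trans ?_)
      -- now the arithmetic
      have hta1 : (1:ℝ) ≤ t * a := by
        have := mul_le_mul_of_nonneg_right htge ha0.le
        rwa [inv_mul_cancel₀ (ne_of_gt ha0)] at this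
      have hσt : σ + u⁻¹ < t := by
        have : u⁻¹ < t := lt_of_lt_of_le huia htge
        linarith
      unfold phiB
      rw [if_pos hσt]
      set c := ⌈(t - (σ + u⁻¹)) * a⌉₊ with hcdef
      have hcpos : 0 < c := Nat.ceil_pos.2 (mul_pos (by linarith) ha0)
      have hmc : ⌊t * a⌋₊ ≤ c := by
        have hfl : (⌊t * a⌋₊ : ℝ) ≤ t * a := Nat.floor_le (by linarith)
        have haainv : a⁻¹ * a = 1 := inv_mul_cancel₀ (ne_of_gt ha0)
        have harg : t * a - 1 < (t - (σ + u⁻¹)) * a := by nlinarith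
        have hceil : (t - (σ + u⁻¹)) * a ≤ (c:ℝ) := Nat.le_ceil _
        have : (⌊t * a⌋₊ : ℝ) < (c : ℝ) + 1 := by linarith
        exact_mod_cast Nat.lt_add_one_iff.1 (by exact_mod_cast this)
      have hstep : ENNReal.ofReal (p + q) * (ENNReal.ofReal (p + q)) ^ (c - 1)
          = (ENNReal.ofReal (p + q)) ^ c := by
        rw [← pow_succ']
        congr 1
        omega
      rw [hstep]
      exact pq_pow_mono hpq1 hmc
    · -- σ < -u⁻¹ : everything vanishes
      have hz : ∀ n ∈ Finset.range N, Dd a b p q t k n σ u = 0 := by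
        intro n _
        unfold Dd
        split_ifs with h
        · exact Top_zero_of_neg (fun σ' u' hσ' => chi_neg ha0 htge n σ' u' hσ') (by push_neg at hlow; linarith)
        · rfl
      rw [Finset.sum_eq_zero hz]
      exact zero_le
  · have hz : ∀ n ∈ Finset.range N, Dd a b p q t k n σ u = 0 := by
      intro n _
      unfold Dd
      rw [if_neg (by tauto)]
    rw [Finset.sum_eq_zero hz]
    exact zero_le

end Pot

section AE
variable {a b : ℝ}

def Phi : ℝ × ℝ → ℝ × ℝ := fun z => (-(z.1 * z.2), z.2)

lemma Phi_meas : Measurable Phi :=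
  ((measurable_fst.mul measurable_snd).neg).prodMk measurable_snd

def Dset : Set (ℝ × ℝ) := {z | -(z.1 * z.2) < 1}

lemma Dset_meas : MeasurableSet Dset :=
  measurableSet_lt ((measurable_fst.mul measurable_snd).neg) measurable_const

lemma ae_mem_V : ∀ᵐ z ∂(rho a b), z.2 ∈ Set.Ioo a b := by
  rw [Filter.eventually_iff, mem_ae_iff]
  have hset : {z : ℝ × ℝ | z.2 ∈ Set.Ioo a b}ᶜ = Set.univ ×ˢ (Set.Ioo a b)ᶜ := by
    ext z; simp [Set.mem_prod]
  rw [hset]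
  unfold rho
  rw [Measure.prod_prod, Measure.restrict_apply measurableSet_Ioo.compl]
  simp

lemma map_ac (ha0 : 0 < a) :
    (Measure.map Phi ((rho a b).restrict Dset))
      ≪ (((volume : Measure ℝ).prod volume).restrict ((Set.Iio (1:ℝ)) ×ˢ Set.Ioo a b)) := by
  apply Measure.AbsolutelyContinuous.mk
  intro N hN h0
  have hS : MeasurableSet ((Set.Iio (1:ℝ)) ×ˢ Set.Ioo a b) :=
    measurableSet_Iio.prod measurableSet_Ioo
  rw [Measure.restrict_apply hN] at h0
  -- slices of N ∩ S are a.e. null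
  have h0' : ∀ᵐ w ∂(volume : Measure ℝ),
      (volume : Measure ℝ) ((fun x => (x, w)) ⁻¹' (N ∩ (Set.Iio (1:ℝ)) ×ˢ Set.Ioo a b)) = 0 := by
    rw [Measure.prod_apply_symm (hN.inter hS)] at h0
    exact (lintegral_eq_zero_iff (measurable_measure_prodMk_right (hN.inter hS))).1 h0
  rw [Measure.map_apply Phi_meas hN, Measure.restrict_apply (Phi_meas hN)]
  unfold rho
  rw [Measure.prod_apply_symm ((Phi_meas hN).inter Dset_meas)]
  have haen : ∀ᵐ w ∂((volume : Measure ℝ).restrict (Set.Ioo a b)),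
      (volume : Measure ℝ) ((fun σ => (σ, w)) ⁻¹' (Phi ⁻¹' N ∩ Dset)) = 0 := by
    filter_upwards [ae_restrict_of_ae h0', ae_restrict_mem measurableSet_Ioo] with w hw hwV
    have hw0 : w ≠ 0 := ne_of_gt (ha0.trans hwV.1)
    have hsub : (fun σ => (σ, w)) ⁻¹' (Phi ⁻¹' N ∩ Dset)
        ⊆ (fun σ => -w * σ) ⁻¹' ((fun x => (x, w)) ⁻¹' (N ∩ (Set.Iio (1:ℝ)) ×ˢ Set.Ioo a b)) := by
      intro σ hσ
      obtain ⟨hσ1, hσ2⟩ := hσ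
      refine ⟨?_, ?_, hwV⟩
      · show (-w * σ, w) ∈ N
        have : -w * σ = -(σ * w) := by ring
        rw [this]
        exact hσ1
      · show -w * σ < 1
        have : -w * σ = -(σ * w) := by ring
        rw [this]
        exact hσ2
    apply measure_mono_null hsub
    have hAm : MeasurableSet ((fun x => (x, w)) ⁻¹' (N ∩ (Set.Iio (1:ℝ)) ×ˢ Set.Ioo a b)) :=
      (hN.inter hS).preimage (measurable_id.prodMk measurable_const)
    have hmap := Real.map_volume_mul_left (a := -w) (by simpa using hw0)
    calc (volume : Measure ℝ) ((fun σ => -w * σ) ⁻¹' _)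
        = (Measure.map (fun σ => -w * σ) (volume : Measure ℝ))
            ((fun x => (x, w)) ⁻¹' (N ∩ (Set.Iio (1:ℝ)) ×ˢ Set.Ioo a b)) := by
          rw [Measure.map_apply (by fun_prop) hAm]
      _ = ENNReal.ofReal |(-w)⁻¹| * (volume : Measure ℝ)
            ((fun x => (x, w)) ⁻¹' (N ∩ (Set.Iio (1:ℝ)) ×ˢ Set.Ioo a b)) := by
          rw [show (fun σ => -w * σ) = (fun σ => -w * σ) from rfl, hmap]
          simp [Measure.smul_apply]
      _ = 0 := by rw [hw, mul_zero]
  calc ∫⁻ w, (volume : Measure ℝ) ((fun σ => (σ, w)) ⁻¹' (Phi ⁻¹' N ∩ Dset))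
        ∂((volume : Measure ℝ).restrict (Set.Ioo a b))
      = ∫⁻ _, 0 ∂((volume : Measure ℝ).restrict (Set.Ioo a b)) := lintegral_congr_ae haen
    _ = 0 := lintegral_zero

lemma ae_pull (ha0 : 0 < a) {P : ℝ × ℝ → Prop}
    (h : ∀ᵐ z ∂(((volume : Measure ℝ).prod volume).restrict ((Set.Iio (1:ℝ)) ×ˢ Set.Ioo a b)),
      P z) :
    ∀ᵐ z ∂(rho a b), -(z.1 * z.2) < 1 → P (-(z.1 * z.2), z.2) := by
  have h2 : ∀ᵐ y ∂(Measure.map Phi ((rho a b).restrict Dset)), P y :=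
    Filter.Eventually.filter_mono (Measure.AbsolutelyContinuous.ae_le (map_ac ha0)) h
  have h3 : ∀ᵐ z ∂((rho a b).restrict Dset), P (Phi z) :=
    ae_of_ae_map Phi_meas.aemeasurable h2
  have h4 := ae_imp_of_ae_restrict h3
  filter_upwards [h4] with z hz hlt
  exact hz hlt

end AE

section HB
variable {a b p q t : ℝ} {k : ℝ → ℝ → ℝ} {ftil : ℝ × ℝ → ℝ}

lemma lintegral_ell (hkm : Measurable (Function.uncurry k)) {v : ℝ} {g : ℝ → ℝ≥0∞}
    (hg : Measurable g) :
    ∫⁻ u, g u ∂(ell p q k volume (Set.Ioo a b) v)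
      = (∫⁻ u in Set.Ioo a b, ENNReal.ofReal (p * u * v⁻¹ * k u v) * g u)
        + ENNReal.ofReal q * g v := by
  unfold ell
  have hdens : Measurable fun u => ENNReal.ofReal (p * u * v⁻¹ * k u v) := by
    apply Measurable.ennreal_ofReal
    exact ((measurable_const.mul measurable_id).mul measurable_const).mul
      (hkm.comp (measurable_id.prodMk measurable_const))
  rw [lintegral_add_measure, lintegral_withDensity_eq_lintegral_mul _ hdens hg,
    lintegral_smul_measure, lintegral_dirac' _ hg]
  rfl

lemma HB (ha0 : 0 < a) (hp : 0 ≤ p) (hknn : ∀ w v : ℝ, 0 ≤ k w v)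
    (hkm : Measurable (Function.uncurry k)) (hftil : Measurable ftil)
    (hbd : ∀ᵐ z ∂(((volume : Measure ℝ).prod volume).restrict
        ((Set.Iio (1:ℝ)) ×ˢ Set.Ioo a b)),
      z.1 ≤ 0 →
        Integrable (fun w => ftil (1 + z.1 * w * z.2⁻¹, w))
          (ell p q k volume (Set.Ioo a b) z.2) ∧
        ftil z = ∫ w, ftil (1 + z.1 * w * z.2⁻¹, w)
          ∂(ell p q k volume (Set.Ioo a b) z.2)) :
    ∀ᵐ z ∂(rho a b), 0 ≤ z.1 →
      ENNReal.ofReal z.2 * Ff ftil z.1 z.2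
        ≤ (∫⁻ u in Set.Ioo a b,
              ENNReal.ofReal p *
                (ENNReal.ofReal (k u z.2) * (ENNReal.ofReal u * Ff ftil (z.1 - u⁻¹) u)))
            + ENNReal.ofReal q * (ENNReal.ofReal z.2 * Ff ftil (z.1 - z.2⁻¹) z.2) := by
  filter_upwards [ae_pull ha0 hbd, ae_mem_V] with z hpull hV hσ0
  have hw0 : 0 < z.2 := ha0.trans hV.1
  have hwne : z.2 ≠ 0 := ne_of_gt hw0
  have hlt : -(z.1 * z.2) < 1 := by nlinarith
  have hcond : -(z.1 * z.2) ≤ 0 := neg_nonpos.2 (mul_nonneg hσ0 hw0.le)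
  obtain ⟨hint, hid⟩ := hpull hlt hcond
  have hgm : Measurable fun u => (‖ftil (1 + -(z.1 * z.2) * u * z.2⁻¹, u)‖₊ : ℝ≥0∞) := by
    apply Measurable.coe_nnreal_ennreal
    apply Measurable.nnnorm
    exact hftil.comp ((measurable_const.add
      ((measurable_const.mul measurable_id).mul measurable_const)).prodMk measurable_id)
  have step1 : ENNReal.ofReal z.2 * Ff ftil z.1 z.2
      ≤ ENNReal.ofReal z.2 * ∫⁻ u, (‖ftil (1 + -(z.1 * z.2) * u * z.2⁻¹, u)‖₊ : ℝ≥0∞)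
          ∂(ell p q k volume (Set.Ioo a b) z.2) := by
    apply mul_le_mul_right
    show ENNReal.ofReal |ftil (-(z.1 * z.2), z.2)| ≤ _
    rw [hid, ← Real.enorm_eq_ofReal_abs]
    exact enorm_integral_le_lintegral_enorm _
  refine step1.trans ?_
  rw [lintegral_ell hkm hgm]
  rw [mul_add]
  apply add_le_add
  · -- p part
    rw [← lintegral_const_mul' _ _ ENNReal.ofReal_ne_top]
    apply le_of_eq
    apply setLIntegral_congr_fun measurableSet_Ioo
    intro u hu
    have hu0 : 0 < u := ha0.trans hu.1
    have hune : u ≠ 0 := ne_of_gt hu0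
    have harg : 1 + -(z.1 * z.2) * u * z.2⁻¹ = -((z.1 - u⁻¹) * u) := by
      field_simp
      ring
    have hcoef : ENNReal.ofReal z.2 * ENNReal.ofReal (p * u * z.2⁻¹ * k u z.2)
        = ENNReal.ofReal p * (ENNReal.ofReal (k u z.2) * ENNReal.ofReal u) := by
      rw [← ENNReal.ofReal_mul hw0.le]
      rw [show z.2 * (p * u * z.2⁻¹ * k u z.2) = p * (k u z.2 * u) by field_simp]
      rw [ENNReal.ofReal_mul hp, ENNReal.ofReal_mul (hknn u z.2)]
    calc ENNReal.ofReal z.2 * (ENNReal.ofReal (p * u * z.2⁻¹ * k u z.2)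
          * (‖ftil (1 + -(z.1 * z.2) * u * z.2⁻¹, u)‖₊ : ℝ≥0∞))
        = (ENNReal.ofReal z.2 * ENNReal.ofReal (p * u * z.2⁻¹ * k u z.2))
            * (‖ftil (1 + -(z.1 * z.2) * u * z.2⁻¹, u)‖₊ : ℝ≥0∞) := by ring
      _ = ENNReal.ofReal p *
            (ENNReal.ofReal (k u z.2) * (ENNReal.ofReal u * Ff ftil (z.1 - u⁻¹) u)) := by
          rw [hcoef]
          unfold Ff
          rw [← enorm_eq_nnnorm, Real.enorm_eq_ofReal_abs, harg]
          ring
  · -- q part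
    apply le_of_eq
    have harg : 1 + -(z.1 * z.2) * z.2 * z.2⁻¹ = -((z.1 - z.2⁻¹) * z.2) := by
      field_simp
      ring
    rw [show ENNReal.ofReal z.2 * (ENNReal.ofReal q
        * (‖ftil (1 + -(z.1 * z.2) * z.2 * z.2⁻¹, z.2)‖₊ : ℝ≥0∞))
      = ENNReal.ofReal q * (ENNReal.ofReal z.2
        * (‖ftil (1 + -(z.1 * z.2) * z.2 * z.2⁻¹, z.2)‖₊ : ℝ≥0∞)) by ring]
    congr 1
    unfold Ff
    rw [← enorm_eq_nnnorm, Real.enorm_eq_ofReal_abs, harg]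

end HB

section OneStep
variable {a b p q t : ℝ} {k : ℝ → ℝ → ℝ} {ftil : ℝ × ℝ → ℝ}

lemma pterm_meas (hkm : Measurable (Function.uncurry k)) (hftil : Measurable ftil) :
    Measurable (fun z : ℝ × ℝ => ∫⁻ u in Set.Ioo a b,
      ENNReal.ofReal p * (ENNReal.ofReal (k u z.2)
        * (ENNReal.ofReal u * Ff ftil (z.1 - u⁻¹) u))) := by
  apply Measurable.lintegral_prod_right (f := fun (z : ℝ × ℝ) (u : ℝ) =>
    ENNReal.ofReal p * (ENNReal.ofReal (k u z.2) * (ENNReal.ofReal u * Ff ftil (z.1 - u⁻¹) u)))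
  apply Measurable.const_mul
  apply Measurable.fun_mul
  · exact (hkm.comp (measurable_snd.prodMk (measurable_snd.comp measurable_fst))).ennreal_ofReal
  apply Measurable.fun_mul
  · exact measurable_snd.ennreal_ofReal
  · exact (Ff_meas hftil).comp
      (((measurable_fst.comp measurable_fst).sub measurable_snd.inv).prodMk measurable_snd)

lemma Ff_comp_meas (hftil : Measurable ftil) :
    Measurable (fun z : ℝ × ℝ => Ff ftil (z.1 - z.2⁻¹) z.2) :=
  (Ff_meas hftil).comp ((measurable_fst.sub measurable_snd.inv).prodMk measurable_snd)

lemma onestep (ha0 : 0 < a) (hp : 0 ≤ p) (hknn : ∀ w v : ℝ, 0 ≤ k w v)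
    (hkm : Measurable (Function.uncurry k)) (hftil : Measurable ftil)
    (hbd : ∀ᵐ z ∂(((volume : Measure ℝ).prod volume).restrict
        ((Set.Iio (1:ℝ)) ×ˢ Set.Ioo a b)),
      z.1 ≤ 0 →
        Integrable (fun w => ftil (1 + z.1 * w * z.2⁻¹, w))
          (ell p q k volume (Set.Ioo a b) z.2) ∧
        ftil z = ∫ w, ftil (1 + z.1 * w * z.2⁻¹, w)
          ∂(ell p q k volume (Set.Ioo a b) z.2))
    (ψ : ℝ → ℝ → ℝ≥0∞) (hψm : Measurable (fun z : ℝ × ℝ => ψ z.1 z.2))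
    (hψ0 : ∀ σ u, σ < 0 → ψ σ u = 0) :
    Xi a b ftil ψ ≤ Xi a b ftil (Top a b p q k ψ) := by
  classical
  set μV := (volume : Measure ℝ).restrict (Set.Ioo a b) with hμV
  -- the p- and q- dominating terms
  set pt : ℝ × ℝ → ℝ≥0∞ := fun z => ∫⁻ u in Set.Ioo a b,
    ENNReal.ofReal p * (ENNReal.ofReal (k u z.2)
      * (ENNReal.ofReal u * Ff ftil (z.1 - u⁻¹) u)) with hpt
  set qt : ℝ × ℝ → ℝ≥0∞ := fun z =>
    ENNReal.ofReal q * (ENNReal.ofReal z.2 * Ff ftil (z.1 - z.2⁻¹) z.2) with hqt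
  have hptm : Measurable pt := pterm_meas hkm hftil
  have hqtm : Measurable qt := by
    apply Measurable.const_mul
    exact (measurable_snd.ennreal_ofReal).mul (Ff_comp_meas hftil)
  -- Step A
  have stepA : Xi a b ftil ψ ≤ ∫⁻ z, ψ z.1 z.2 * (pt z + qt z) ∂(rho a b) := by
    apply lintegral_mono_ae
    filter_upwards [HB ha0 hp hknn hkm hftil hbd] with z hz
    by_cases hσ : 0 ≤ z.1
    · exact mul_le_mul_right (hz hσ) _
    · rw [hψ0 z.1 z.2 (lt_of_not_ge hσ), zero_mul, zero_mul]
  refine stepA.trans ?_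
  -- Step B : split
  have stepB : ∫⁻ z, ψ z.1 z.2 * (pt z + qt z) ∂(rho a b)
      = (∫⁻ z, ψ z.1 z.2 * pt z ∂(rho a b)) + ∫⁻ z, ψ z.1 z.2 * qt z ∂(rho a b) := by
    rw [← lintegral_add_left (hψm.fun_mul hptm)]
    congr 1
    funext z
    ring
  rw [stepB]
  -- q part
  have stepQ : ∫⁻ z, ψ z.1 z.2 * qt z ∂(rho a b)
      = ∫⁻ z, (ENNReal.ofReal q * ψ (z.1 + z.2⁻¹) z.2)
          * (ENNReal.ofReal z.2 * Ff ftil z.1 z.2) ∂(rho a b) := by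
    unfold rho
    rw [lintegral_prod_symm _ ((hψm.fun_mul hqtm).aemeasurable)]
    rw [lintegral_prod_symm _ ((by
      apply Measurable.mul
      · apply Measurable.const_mul
        exact hψm.comp ((measurable_fst.add measurable_snd.inv).prodMk measurable_snd)
      · exact (measurable_snd.ennreal_ofReal).mul (Ff_meas hftil) :
        Measurable (fun z : ℝ × ℝ => (ENNReal.ofReal q * ψ (z.1 + z.2⁻¹) z.2)
          * (ENNReal.ofReal z.2 * Ff ftil z.1 z.2))).aemeasurable)]
    apply lintegral_congr_ae
    filter_upwards [ae_restrict_mem measurableSet_Ioo] with w hw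
    have key : ∀ σ : ℝ, ψ σ w * qt (σ, w)
        = (fun τ => (ENNReal.ofReal q * ψ (τ + w⁻¹) w)
            * (ENNReal.ofReal w * Ff ftil τ w)) (σ + -w⁻¹) := by
      intro σ
      simp only [hqt]
      rw [← sub_eq_add_neg, sub_add_cancel]
      ring
    calc ∫⁻ σ, ψ σ w * qt (σ, w) = ∫⁻ σ, (fun τ => (ENNReal.ofReal q * ψ (τ + w⁻¹) w)
            * (ENNReal.ofReal w * Ff ftil τ w)) (σ + -w⁻¹) := by
          apply lintegral_congr
          exact key
      _ = ∫⁻ τ, (ENNReal.ofReal q * ψ (τ + w⁻¹) w) * (ENNReal.ofReal w * Ff ftil τ w) :=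
          lintegral_add_right_eq_self (μ := (volume : Measure ℝ))
            (fun τ => (ENNReal.ofReal q * ψ (τ + w⁻¹) w) * (ENNReal.ofReal w * Ff ftil τ w))
            (-w⁻¹)
  -- p part
  set A : ℝ × ℝ → ℝ≥0∞ := fun z =>
    (ENNReal.ofReal p * ∫⁻ w in Set.Ioo a b, ENNReal.ofReal (k z.2 w) * ψ (z.1 + z.2⁻¹) w)
      * (ENNReal.ofReal z.2 * Ff ftil z.1 z.2) with hA
  have hinner_meas : Measurable (fun z : ℝ × ℝ =>
      ∫⁻ w in Set.Ioo a b, ENNReal.ofReal (k z.2 w) * ψ (z.1 + z.2⁻¹) w) := by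
    apply Measurable.lintegral_prod_right (f := fun (z : ℝ × ℝ) (w : ℝ) =>
      ENNReal.ofReal (k z.2 w) * ψ (z.1 + z.2⁻¹) w)
    apply Measurable.mul
    · exact (hkm.comp ((measurable_snd.comp measurable_fst).prodMk measurable_snd)).ennreal_ofReal
    · exact hψm.comp (((measurable_fst.comp measurable_fst).add
        ((measurable_snd.comp measurable_fst).inv)).prodMk measurable_snd)
  have hAm : Measurable A :=
    ((measurable_const.mul hinner_meas)).mul ((measurable_snd.ennreal_ofReal).mul (Ff_meas hftil))
  have hFne : ∀ σ u : ℝ, Ff ftil σ u ≠ ⊤ := fun σ u => ENNReal.ofReal_ne_top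
  have stepP : ∫⁻ z, ψ z.1 z.2 * pt z ∂(rho a b) = ∫⁻ z, A z ∂(rho a b) := by
    have hXm : Measurable (fun zw : (ℝ × ℝ) × ℝ =>
        ψ zw.1.1 zw.1.2 * (ENNReal.ofReal p * (ENNReal.ofReal (k zw.2 zw.1.2)
          * (ENNReal.ofReal zw.2 * Ff ftil (zw.1.1 - zw.2⁻¹) zw.2)))) := by
      apply Measurable.fun_mul
      · exact hψm.comp measurable_fst
      apply Measurable.const_mul
      apply Measurable.fun_mul
      · exact (hkm.comp (measurable_snd.prodMk
          ((measurable_snd.comp measurable_fst)))).ennreal_ofReal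
      apply Measurable.fun_mul
      · exact measurable_snd.ennreal_ofReal
      · exact (Ff_meas hftil).comp
          (((measurable_fst.comp measurable_fst).sub measurable_snd.inv).prodMk measurable_snd)
    unfold rho
    rw [lintegral_prod _ ((hψm.fun_mul hptm).aemeasurable)]
    rw [lintegral_prod_symm _ hAm.aemeasurable]
    -- for each σ : swap inner integrals and reorganize
    have key : ∀ σ : ℝ, (∫⁻ w, ψ σ w * pt (σ, w) ∂μV)
        = ∫⁻ u, (∫⁻ w, ψ σ w * (ENNReal.ofReal p * (ENNReal.ofReal (k u w)
            * (ENNReal.ofReal u * Ff ftil (σ - u⁻¹) u))) ∂μV) ∂μV := by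
      intro σ
      rw [← lintegral_lintegral_swap]
      · apply lintegral_congr
        intro w
        simp only [hpt]
        exact (lintegral_const_mul (ψ σ w) (by
          apply Measurable.const_mul
          apply Measurable.fun_mul
          · exact (hkm.comp (measurable_id.prodMk measurable_const)).ennreal_ofReal
          apply Measurable.fun_mul
          · exact measurable_id.ennreal_ofReal
          · exact (Ff_meas hftil).comp
              ((measurable_const.sub measurable_inv).prodMk measurable_id))).symm
      · apply Measurable.aemeasurable
        exact hXm.comp ((measurable_const.prodMk measurable_fst).prodMk measurable_snd)
    calc ∫⁻ σ, (∫⁻ w, ψ σ w * pt (σ, w) ∂μV)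
        = ∫⁻ σ, ∫⁻ u, (∫⁻ w, ψ σ w * (ENNReal.ofReal p * (ENNReal.ofReal (k u w)
            * (ENNReal.ofReal u * Ff ftil (σ - u⁻¹) u))) ∂μV) ∂μV := lintegral_congr key
      _ = ∫⁻ u, (∫⁻ σ, (∫⁻ w, ψ σ w * (ENNReal.ofReal p * (ENNReal.ofReal (k u w)
            * (ENNReal.ofReal u * Ff ftil (σ - u⁻¹) u))) ∂μV)) ∂μV := by
          apply lintegral_lintegral_swap
          apply Measurable.aemeasurable
          apply Measurable.lintegral_prod_right (f := fun (zu : ℝ × ℝ) (w : ℝ) =>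
            ψ zu.1 w * (ENNReal.ofReal p * (ENNReal.ofReal (k zu.2 w)
              * (ENNReal.ofReal zu.2 * Ff ftil (zu.1 - zu.2⁻¹) zu.2))))
          apply Measurable.mul
          · exact hψm.comp ((measurable_fst.comp measurable_fst).prodMk measurable_snd)
          apply Measurable.const_mul
          apply Measurable.fun_mul
          · exact (hkm.comp ((measurable_snd.comp measurable_fst).prodMk
              measurable_snd)).ennreal_ofReal
          apply Measurable.fun_mul
          · exact (measurable_snd.comp measurable_fst).ennreal_ofReal
          · exact (Ff_meas hftil).comp
              (((measurable_fst.comp measurable_fst).sub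
                (measurable_snd.comp measurable_fst).inv).prodMk
                (measurable_snd.comp measurable_fst))
      _ = ∫⁻ u, (∫⁻ σ, A (σ, u)) ∂μV := by
          apply lintegral_congr
          intro u
          have hshift : ∀ σ : ℝ, (∫⁻ w, ψ σ w * (ENNReal.ofReal p * (ENNReal.ofReal (k u w)
              * (ENNReal.ofReal u * Ff ftil (σ - u⁻¹) u))) ∂μV)
              = (fun τ => ∫⁻ w, ψ (τ + u⁻¹) w * (ENNReal.ofReal p * (ENNReal.ofReal (k u w)
                * (ENNReal.ofReal u * Ff ftil τ u))) ∂μV) (σ + -u⁻¹) := by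
            intro σ
            simp only [← sub_eq_add_neg, sub_add_cancel]
          calc ∫⁻ σ, (∫⁻ w, ψ σ w * (ENNReal.ofReal p * (ENNReal.ofReal (k u w)
                * (ENNReal.ofReal u * Ff ftil (σ - u⁻¹) u))) ∂μV)
              = ∫⁻ σ, (fun τ => ∫⁻ w, ψ (τ + u⁻¹) w * (ENNReal.ofReal p
                  * (ENNReal.ofReal (k u w) * (ENNReal.ofReal u * Ff ftil τ u))) ∂μV)
                  (σ + -u⁻¹) := lintegral_congr hshift
            _ = ∫⁻ τ, (∫⁻ w, ψ (τ + u⁻¹) w * (ENNReal.ofReal p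
                  * (ENNReal.ofReal (k u w) * (ENNReal.ofReal u * Ff ftil τ u))) ∂μV) :=
                lintegral_add_right_eq_self (μ := (volume : Measure ℝ))
                  (fun τ => ∫⁻ w, ψ (τ + u⁻¹) w * (ENNReal.ofReal p
                    * (ENNReal.ofReal (k u w) * (ENNReal.ofReal u * Ff ftil τ u))) ∂μV) (-u⁻¹)
            _ = ∫⁻ τ, A (τ, u) := by
                apply lintegral_congr
                intro τ
                simp only [hA]
                calc ∫⁻ w, ψ (τ + u⁻¹) w * (ENNReal.ofReal p * (ENNReal.ofReal (k u w)
                      * (ENNReal.ofReal u * Ff ftil τ u))) ∂μV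
                    = ∫⁻ w, (ENNReal.ofReal (k u w) * ψ (τ + u⁻¹) w)
                        * (ENNReal.ofReal p * (ENNReal.ofReal u * Ff ftil τ u)) ∂μV := by
                      apply lintegral_congr
                      intro w
                      ring
                  _ = (∫⁻ w, ENNReal.ofReal (k u w) * ψ (τ + u⁻¹) w ∂μV)
                        * (ENNReal.ofReal p * (ENNReal.ofReal u * Ff ftil τ u)) := by
                      apply lintegral_mul_const'
                      exact ENNReal.mul_ne_top ENNReal.ofReal_ne_top
                        (ENNReal.mul_ne_top ENNReal.ofReal_ne_top (hFne τ u))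
                  _ = (ENNReal.ofReal p * ∫⁻ w, ENNReal.ofReal (k u w) * ψ (τ + u⁻¹) w ∂μV)
                        * (ENNReal.ofReal u * Ff ftil τ u) := by ring
  rw [stepP, stepQ]
  -- combine
  have hQm : Measurable (fun z : ℝ × ℝ => (ENNReal.ofReal q * ψ (z.1 + z.2⁻¹) z.2)
      * (ENNReal.ofReal z.2 * Ff ftil z.1 z.2)) := by
    apply Measurable.mul
    · apply Measurable.const_mul
      exact hψm.comp ((measurable_fst.add measurable_snd.inv).prodMk measurable_snd)
    · exact (measurable_snd.ennreal_ofReal).mul (Ff_meas hftil)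
  have hsplit : Xi a b ftil (Top a b p q k ψ)
      = (∫⁻ z, A z ∂(rho a b)) + ∫⁻ z, (ENNReal.ofReal q * ψ (z.1 + z.2⁻¹) z.2)
          * (ENNReal.ofReal z.2 * Ff ftil z.1 z.2) ∂(rho a b) := by
    unfold Xi
    rw [← lintegral_add_left hAm]
    apply lintegral_congr
    intro z
    unfold Top
    simp only [hA]
    ring
  rw [hsplit]

end OneStep

section CoV
variable {a b p q t : ℝ} {k : ℝ → ℝ → ℝ} {ftil : ℝ × ℝ → ℝ}

/-- Change of variables identifying the shifted integral with `Xi` of the initial profile. -/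
lemma Jlin_eq (ha0 : 0 < a) (htge : a⁻¹ ≤ t) (hftil : Measurable ftil) :
    ∫⁻ z, ENNReal.ofReal |ftil (z.1 - t * z.2, z.2)|
        ∂(((volume : Measure ℝ).prod volume).restrict ((Set.Ioo (0:ℝ) 1) ×ˢ Set.Ioo a b))
      = Xi a b ftil (chi a b p q t k 0) := by
  have hm1 : Measurable (fun z : ℝ × ℝ => ENNReal.ofReal |ftil (z.1 - t * z.2, z.2)|) := by
    apply Measurable.ennreal_ofReal
    exact (hftil.comp ((measurable_fst.sub (measurable_const.mul measurable_snd)).prodMk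
      measurable_snd)).abs
  rw [← Measure.prod_restrict]
  rw [lintegral_prod_symm _ hm1.aemeasurable]
  unfold Xi rho
  rw [lintegral_prod_symm _ (((chi0_meas).fun_mul
    ((measurable_snd.ennreal_ofReal).fun_mul (Ff_meas hftil))).aemeasurable)]
  apply lintegral_congr_ae
  filter_upwards [ae_restrict_mem measurableSet_Ioo] with v hv
  have hv0 : 0 < v := ha0.trans hv.1
  have hvne : v ≠ 0 := ne_of_gt hv0
  have hnvne : -v ≠ 0 := by simpa using hvne
  set G : ℝ → ℝ≥0∞ := fun x =>
    (Set.Ioo (0:ℝ) 1).indicator (fun x => ENNReal.ofReal |ftil (x - t * v, v)|) x with hG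
  calc ∫⁻ x in Set.Ioo (0:ℝ) 1, ENNReal.ofReal |ftil (x - t * v, v)|
      = ∫⁻ x, G x := by
        rw [hG, lintegral_indicator measurableSet_Ioo]
    _ = ENNReal.ofReal |(-v)| * ∫⁻ σ, G (-v * σ + t * v) := lint_affine' G hnvne (t * v)
    _ = ∫⁻ σ, ENNReal.ofReal v * G (-v * σ + t * v) := by
        rw [← lintegral_const_mul' _ _ ENNReal.ofReal_ne_top]
        congr 2
        rw [abs_neg, abs_of_pos hv0]
    _ = ∫⁻ σ, chi a b p q t k 0 σ v * (ENNReal.ofReal v * Ff ftil σ v) := by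
        apply lintegral_congr
        intro σ
        simp only [hG, Set.indicator_apply, Set.mem_Ioo, chi]
        have hkey : -v * σ + t * v = (t - σ) * v := by ring
        have hvv : v⁻¹ * v = 1 := inv_mul_cancel₀ hvne
        have hiff : (0 < -v * σ + t * v ∧ -v * σ + t * v < 1)
            ↔ (t - v⁻¹ < σ ∧ σ < t) := by
          rw [hkey]
          constructor
          · rintro ⟨h1, h2⟩
            have hσt : σ < t := by nlinarith
            refine ⟨?_, hσt⟩
            by_contra hcon
            push_neg at hcon
            have h3 : v⁻¹ ≤ t - σ := by linarith
            have h4 : v⁻¹ * v ≤ (t - σ) * v := mul_le_mul_of_nonneg_right h3 hv0.le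
            rw [hvv] at h4
            linarith
          · rintro ⟨h1, h2⟩
            constructor
            · exact mul_pos (by linarith) hv0
            · have h3 : t - σ < v⁻¹ := by linarith
              have h4 : (t - σ) * v < v⁻¹ * v := mul_lt_mul_of_pos_right h3 hv0
              rw [hvv] at h4
              linarith
        split_ifs with h1 h2 h2
        · rw [one_mul]
          congr 1
          rw [show Ff ftil σ v = ENNReal.ofReal |ftil (-(σ * v), v)| from rfl]
          rw [show -v * σ + t * v - t * v = -(σ * v) by ring]
        · exact absurd ⟨hv, hiff.1 h1⟩ h2
        · exact absurd (hiff.2 h2.2) h1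
        · rw [zero_mul, mul_zero]

/-- Change of variables for the stopped mass. -/
lemma stop_side (ha0 : 0 < a) (hftil : Measurable ftil) :
    ∫⁻ z, (if -z.2⁻¹ ≤ z.1 ∧ z.1 < 0 then (1:ℝ≥0∞) else 0)
        * (ENNReal.ofReal z.2 * Ff ftil z.1 z.2) ∂(rho a b)
      = ∫⁻ z, ENNReal.ofReal |ftil z|
          ∂(((volume : Measure ℝ).prod volume).restrict ((Set.Ioo (0:ℝ) 1) ×ˢ Set.Ioo a b)) := by
  have hm1 : Measurable (fun z : ℝ × ℝ => ENNReal.ofReal |ftil z|) :=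
    (hftil.abs).ennreal_ofReal
  have hitem : Measurable (fun z : ℝ × ℝ =>
      (if -z.2⁻¹ ≤ z.1 ∧ z.1 < 0 then (1:ℝ≥0∞) else 0)
        * (ENNReal.ofReal z.2 * Ff ftil z.1 z.2)) := by
    apply Measurable.mul
    · apply Measurable.ite _ measurable_const measurable_const
      exact (measurableSet_le (measurable_snd.inv.neg) measurable_fst).inter
        (measurableSet_lt measurable_fst measurable_const)
    · exact (measurable_snd.ennreal_ofReal).mul (Ff_meas hftil)
  rw [← Measure.prod_restrict]
  rw [lintegral_prod_symm _ hm1.aemeasurable]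
  unfold rho
  rw [lintegral_prod_symm _ hitem.aemeasurable]
  apply lintegral_congr_ae
  filter_upwards [ae_restrict_mem measurableSet_Ioo] with v hv
  have hv0 : 0 < v := ha0.trans hv.1
  have hvne : v ≠ 0 := ne_of_gt hv0
  have hnvne : -v ≠ 0 := by simpa using hvne
  set G : ℝ → ℝ≥0∞ := fun x =>
    (Set.Ioc (0:ℝ) 1).indicator (fun x => ENNReal.ofReal |ftil (x, v)|) x with hG
  calc ∫⁻ σ, (if -v⁻¹ ≤ σ ∧ σ < 0 then (1:ℝ≥0∞) else 0)
        * (ENNReal.ofReal v * Ff ftil σ v)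
      = ∫⁻ σ, ENNReal.ofReal v * G (-v * σ + 0) := by
        apply lintegral_congr
        intro σ
        simp only [hG, Set.indicator_apply, Set.mem_Ioc, add_zero]
        have hiff : (0 < -v * σ ∧ -v * σ ≤ 1) ↔ (-v⁻¹ ≤ σ ∧ σ < 0) := by
          constructor
          · rintro ⟨h1, h2⟩
            constructor
            · have h3 : -v * σ * v⁻¹ ≤ 1 * v⁻¹ :=
                mul_le_mul_of_nonneg_right h2 (inv_pos.2 hv0).le
              have h4 : -v * σ * v⁻¹ = -σ := by field_simp
              rw [h4, one_mul] at h3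
              linarith
            · nlinarith
          · rintro ⟨h1, h2⟩
            constructor
            · nlinarith
            · have h3 : -σ ≤ v⁻¹ := by linarith
              have h4 : -σ * v ≤ v⁻¹ * v := mul_le_mul_of_nonneg_right h3 hv0.le
              rw [inv_mul_cancel₀ hvne] at h4
              nlinarith
        split_ifs with h1 h2 h2
        · rw [one_mul]
          rw [show Ff ftil σ v = ENNReal.ofReal |ftil (-(σ * v), v)| from rfl]
          rw [show -v * σ = -(σ * v) by ring]
        · exact absurd (hiff.2 h1) h2
        · exact absurd (hiff.1 h2) h1
        · rw [zero_mul, mul_zero]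
    _ = ENNReal.ofReal |(-v)| * ∫⁻ σ, G (-v * σ + 0) := by
        rw [← lintegral_const_mul' _ _ ENNReal.ofReal_ne_top]
        congr 2
        rw [abs_neg, abs_of_pos hv0]
    _ = ∫⁻ x, G x := (lint_affine' G hnvne 0).symm
    _ = ∫⁻ x in Set.Ioc (0:ℝ) 1, ENNReal.ofReal |ftil (x, v)| := by
        rw [hG, lintegral_indicator measurableSet_Ioc]
    _ = ∫⁻ x in Set.Ioo (0:ℝ) 1, ENNReal.ofReal |ftil (x, v)| :=
        (setLIntegral_congr Ioo_ae_eq_Ioc).symm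

end CoV

section Chain
variable {a b p q t : ℝ} {k : ℝ → ℝ → ℝ} {ftil : ℝ × ℝ → ℝ}

lemma wF_meas (hftil : Measurable ftil) :
    Measurable (fun z : ℝ × ℝ => ENNReal.ofReal z.2 * Ff ftil z.1 z.2) :=
  (measurable_snd.ennreal_ofReal).mul (Ff_meas hftil)

lemma chi_split (N : ℕ) : ∀ᵐ z ∂(rho a b),
    Top a b p q k (chi a b p q t k N) z.1 z.2
      = chi a b p q t k (N + 1) z.1 z.2 + Dd a b p q t k N z.1 z.2 := by
  filter_upwards [ae_mem_V] with z hz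
  simp only [chi, Dd]
  by_cases h : 0 ≤ z.1
  · rw [if_pos ⟨h, hz⟩, if_neg (by push_neg; intro hc; linarith), add_zero]
  · rw [if_neg (by tauto), if_pos ⟨lt_of_not_ge h, hz⟩, zero_add]

lemma chain (ha0 : 0 < a) (htge : a⁻¹ ≤ t) (hp : 0 ≤ p) (hknn : ∀ w v : ℝ, 0 ≤ k w v)
    (hkm : Measurable (Function.uncurry k)) (hftil : Measurable ftil)
    (hbd : ∀ᵐ z ∂(((volume : Measure ℝ).prod volume).restrict
        ((Set.Iio (1:ℝ)) ×ˢ Set.Ioo a b)),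
      z.1 ≤ 0 →
        Integrable (fun w => ftil (1 + z.1 * w * z.2⁻¹, w))
          (ell p q k volume (Set.Ioo a b) z.2) ∧
        ftil z = ∫ w, ftil (1 + z.1 * w * z.2⁻¹, w)
          ∂(ell p q k volume (Set.Ioo a b) z.2)) (N : ℕ) :
    Xi a b ftil (chi a b p q t k 0)
      ≤ (∑ n ∈ Finset.range N, Xi a b ftil (Dd a b p q t k n))
          + Xi a b ftil (chi a b p q t k N) := by
  induction N with
  | zero => simp
  | succ N ih =>
    refine ih.trans ?_
    have h1 : Xi a b ftil (chi a b p q t k N) ≤ Xi a b ftil (Top a b p q k (chi a b p q t k N)) :=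
      onestep ha0 hp hknn hkm hftil hbd _ (chi_meas hkm N)
        (fun σ u hσ => chi_neg ha0 htge N σ u hσ)
    have h2 : Xi a b ftil (Top a b p q k (chi a b p q t k N))
        = Xi a b ftil (chi a b p q t k (N + 1)) + Xi a b ftil (Dd a b p q t k N) := by
      unfold Xi
      rw [← lintegral_add_left ((chi_meas hkm (N + 1)).fun_mul (wF_meas hftil))]
      apply lintegral_congr_ae
      filter_upwards [chi_split N] with z hz
      rw [hz]
      ring
    have h3 : Xi a b ftil (chi a b p q t k N)
        ≤ Xi a b ftil (Dd a b p q t k N) + Xi a b ftil (chi a b p q t k (N + 1)) := by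
      rw [add_comm]
      exact h1.trans (le_of_eq h2)
    calc (∑ n ∈ Finset.range N, Xi a b ftil (Dd a b p q t k n))
          + Xi a b ftil (chi a b p q t k N)
        ≤ (∑ n ∈ Finset.range N, Xi a b ftil (Dd a b p q t k n))
          + (Xi a b ftil (Dd a b p q t k N) + Xi a b ftil (chi a b p q t k (N + 1))) :=
          add_le_add le_rfl h3
      _ = (∑ n ∈ Finset.range (N + 1), Xi a b ftil (Dd a b p q t k n))
          + Xi a b ftil (chi a b p q t k (N + 1)) := by
          rw [Finset.sum_range_succ, add_assoc]

lemma Xi_chi_zero (ha0 : 0 < a) (hab : a < b) (htge : a⁻¹ ≤ t) :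
    Xi a b ftil (chi a b p q t k (⌈t * b⌉₊ + 1)) = 0 := by
  have hb0 : 0 < b := ha0.trans hab
  have hz : ∀ σ u, chi a b p q t k (⌈t * b⌉₊ + 1) σ u = 0 := by
    intro σ u
    by_cases h : σ < 0
    · exact chi_neg ha0 htge _ σ u h
    · push_neg at h
      apply chi_big ha0 hab
      have h1 : t * b ≤ (⌈t * b⌉₊ : ℝ) := Nat.le_ceil _
      have h2 : t - (↑(⌈t * b⌉₊ + 1) : ℝ) * b⁻¹ < 0 := by
        have hbb : b * b⁻¹ = 1 := mul_inv_cancel₀ (ne_of_gt hb0)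
        have hbi : 0 < b⁻¹ := inv_pos.2 hb0
        push_cast
        nlinarith
      linarith
  unfold Xi
  have : ∀ z : ℝ × ℝ, chi a b p q t k (⌈t * b⌉₊ + 1) z.1 z.2
      * (ENNReal.ofReal z.2 * Ff ftil z.1 z.2) = 0 := by
    intro z; rw [hz, zero_mul]
  calc ∫⁻ z, chi a b p q t k (⌈t * b⌉₊ + 1) z.1 z.2
        * (ENNReal.ofReal z.2 * Ff ftil z.1 z.2) ∂(rho a b)
      = ∫⁻ _, 0 ∂(rho a b) := lintegral_congr this
    _ = 0 := lintegral_zero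

/-- The main lintegral inequality. -/
lemma main_lin (ha0 : 0 < a) (hab : a < b) (htge : a⁻¹ ≤ t)
    (hp : 0 ≤ p) (hq : 0 ≤ q) (hpq1 : p + q < 1)
    (hknn : ∀ w v : ℝ, 0 ≤ k w v)
    (hk1 : ∀ w ∈ Set.Ioo a b, ∫ v in Set.Ioo a b, k w v = 1)
    (hkm : Measurable (Function.uncurry k)) (hftil : Measurable ftil)
    (hbd : ∀ᵐ z ∂(((volume : Measure ℝ).prod volume).restrict
        ((Set.Iio (1:ℝ)) ×ˢ Set.Ioo a b)),
      z.1 ≤ 0 →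
        Integrable (fun w => ftil (1 + z.1 * w * z.2⁻¹, w))
          (ell p q k volume (Set.Ioo a b) z.2) ∧
        ftil z = ∫ w, ftil (1 + z.1 * w * z.2⁻¹, w)
          ∂(ell p q k volume (Set.Ioo a b) z.2)) :
    ∫⁻ z, ENNReal.ofReal |ftil (z.1 - t * z.2, z.2)|
        ∂(((volume : Measure ℝ).prod volume).restrict ((Set.Ioo (0:ℝ) 1) ×ˢ Set.Ioo a b))
      ≤ (ENNReal.ofReal (p + q)) ^ (⌊t * a⌋₊)
        * ∫⁻ z, ENNReal.ofReal |ftil z|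
            ∂(((volume : Measure ℝ).prod volume).restrict ((Set.Ioo (0:ℝ) 1) ×ˢ Set.Ioo a b)) := by
  rw [Jlin_eq (p := p) (q := q) (k := k) ha0 htge hftil]
  set N := ⌈t * b⌉₊ + 1 with hN
  have hchain := chain ha0 htge hp hknn hkm hftil hbd N
  rw [Xi_chi_zero ha0 hab htge, add_zero] at hchain
  refine hchain.trans ?_
  have hsum : ∑ n ∈ Finset.range N, Xi a b ftil (Dd a b p q t k n)
      = ∫⁻ z, (∑ n ∈ Finset.range N, Dd a b p q t k n z.1 z.2)
          * (ENNReal.ofReal z.2 * Ff ftil z.1 z.2) ∂(rho a b) := by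
    unfold Xi
    rw [← lintegral_finset_sum _ (fun n _ => (Dd_meas hkm n).fun_mul (wF_meas hftil))]
    apply lintegral_congr
    intro z
    rw [Finset.sum_mul]
  rw [hsum]
  calc ∫⁻ z, (∑ n ∈ Finset.range N, Dd a b p q t k n z.1 z.2)
        * (ENNReal.ofReal z.2 * Ff ftil z.1 z.2) ∂(rho a b)
      ≤ ∫⁻ z, ((ENNReal.ofReal (p + q)) ^ (⌊t * a⌋₊)
          * (if -z.2⁻¹ ≤ z.1 ∧ z.1 < 0 then (1:ℝ≥0∞) else 0))
          * (ENNReal.ofReal z.2 * Ff ftil z.1 z.2) ∂(rho a b) := by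
        apply lintegral_mono_ae
        filter_upwards [ae_mem_V] with z hz
        apply mul_le_mul_left
        refine (sumD_le hp hq hpq1 ha0 hab htge hknn hk1 hkm N hz).trans (le_of_eq ?_)
        rw [mul_ite, mul_one, mul_zero]
    _ = (ENNReal.ofReal (p + q)) ^ (⌊t * a⌋₊)
          * ∫⁻ z, (if -z.2⁻¹ ≤ z.1 ∧ z.1 < 0 then (1:ℝ≥0∞) else 0)
            * (ENNReal.ofReal z.2 * Ff ftil z.1 z.2) ∂(rho a b) := by
        rw [← lintegral_const_mul' _ _ (by
          exact ENNReal.pow_ne_top ENNReal.ofReal_ne_top)]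
        apply lintegral_congr
        intro z
        ring
    _ = (ENNReal.ofReal (p + q)) ^ (⌊t * a⌋₊)
          * ∫⁻ z, ENNReal.ofReal |ftil z|
            ∂(((volume : Measure ℝ).prod volume).restrict
              ((Set.Ioo (0:ℝ) 1) ×ˢ Set.Ioo a b)) := by
        rw [stop_side ha0 hftil]

end Chain
end
end Stmt12Aux

open Stmt12Aux in
theorem Stmt12Aux.main_theorem
    (a b p q : ℝ) (ha : 0 ≤ a) (hab : a < b)
    (hp : 0 ≤ p) (hq : 0 ≤ q) (hpq : 0 < p + q)
    (k : ℝ → ℝ → ℝ) (hkm : Measurable (Function.uncurry k))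
    (hknn : ∀ w v : ℝ, 0 ≤ k w v)
    (hk1 : ∀ w ∈ Set.Ioo a b, ∫ v in Set.Ioo a b, k w v = 1)
    (ha0 : 0 < a) (hpq1 : p + q < 1)
    (t : ℝ) (ht : a⁻¹ ≤ t)
    (f ftil : ℝ × ℝ → ℝ)
    (hf : IntegrableOn f ((Set.Ioo (0 : ℝ) 1) ×ˢ Set.Ioo a b)
      ((volume : Measure ℝ).prod (volume : Measure ℝ)))
    (hftil : Measurable ftil)
    (hpos : ∀ᵐ z ∂(((volume : Measure ℝ).prod volume).restrict
        ((Set.Iio (1 : ℝ)) ×ˢ Set.Ioo a b)), 0 < z.1 → ftil z = f z)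
    (hbd : ∀ᵐ z ∂(((volume : Measure ℝ).prod volume).restrict
        ((Set.Iio (1 : ℝ)) ×ˢ Set.Ioo a b)),
      z.1 ≤ 0 →
        Integrable (fun w => ftil (1 + z.1 * w * z.2⁻¹, w))
          (ell p q k volume (Set.Ioo a b) z.2) ∧
        ftil z = ∫ w, ftil (1 + z.1 * w * z.2⁻¹, w)
          ∂(ell p q k volume (Set.Ioo a b) z.2)) :
    ∫ z in (Set.Ioo (0 : ℝ) 1) ×ˢ Set.Ioo a b, |ftil (z.1 - t * z.2, z.2)|
        ∂((volume : Measure ℝ).prod (volume : Measure ℝ))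
      ≤ (p + q) ^ (⌊t * a⌋₊) *
        ∫ z in (Set.Ioo (0 : ℝ) 1) ×ˢ Set.Ioo a b, |f z|
          ∂((volume : Measure ℝ).prod (volume : Measure ℝ)) := by
  have hΩm : MeasurableSet ((Set.Ioo (0 : ℝ) 1) ×ˢ Set.Ioo a b) :=
    measurableSet_Ioo.prod measurableSet_Ioo
  set μΩ := ((volume : Measure ℝ).prod (volume : Measure ℝ)).restrict
    ((Set.Ioo (0 : ℝ) 1) ×ˢ Set.Ioo a b) with hμΩ
  have hfeq : ∀ᵐ z ∂μΩ, ftil z = f z := by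
    have hsub : (Set.Ioo (0 : ℝ) 1) ×ˢ Set.Ioo a b ⊆ (Set.Iio (1 : ℝ)) ×ˢ Set.Ioo a b := by
      rintro z ⟨h1, h2⟩
      exact ⟨h1.2, h2⟩
    have h1 := ae_restrict_of_ae_restrict_of_subset hsub hpos
    filter_upwards [h1, ae_restrict_mem hΩm] with z h2 h3
    exact h2 h3.1.1
  have hms : Measurable (fun z : ℝ × ℝ => |ftil (z.1 - t * z.2, z.2)|) :=
    (hftil.comp ((measurable_fst.sub (measurable_const.mul measurable_snd)).prodMk
      measurable_snd)).abs
  have hL : ∫ z in (Set.Ioo (0 : ℝ) 1) ×ˢ Set.Ioo a b, |ftil (z.1 - t * z.2, z.2)|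
        ∂((volume : Measure ℝ).prod (volume : Measure ℝ))
      = (∫⁻ z, ENNReal.ofReal |ftil (z.1 - t * z.2, z.2)| ∂μΩ).toReal := by
    rw [integral_eq_lintegral_of_nonneg_ae
      (Filter.Eventually.of_forall fun z => abs_nonneg _) hms.aestronglyMeasurable]
  have hRabs : AEStronglyMeasurable (fun z => |f z|) μΩ := by
    simpa only [Real.norm_eq_abs] using hf.1.norm
  have hR : ∫ z in (Set.Ioo (0 : ℝ) 1) ×ˢ Set.Ioo a b, |f z|
        ∂((volume : Measure ℝ).prod (volume : Measure ℝ))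
      = (∫⁻ z, ENNReal.ofReal |f z| ∂μΩ).toReal := by
    rw [integral_eq_lintegral_of_nonneg_ae
      (Filter.Eventually.of_forall fun z => abs_nonneg _) hRabs]
  have hcongr : ∫⁻ z, ENNReal.ofReal |ftil z| ∂μΩ = ∫⁻ z, ENNReal.ofReal |f z| ∂μΩ := by
    apply lintegral_congr_ae
    filter_upwards [hfeq] with z hz
    rw [hz]
  have hfin : (∫⁻ z, ENNReal.ofReal |f z| ∂μΩ) ≠ ⊤ := by
    have h2 := hf.2
    rw [HasFiniteIntegral] at h2
    have : (∫⁻ z, ENNReal.ofReal |f z| ∂μΩ) = ∫⁻ z, (‖f z‖₊ : ℝ≥0∞) ∂μΩ := by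
      apply lintegral_congr
      intro z
      rw [← enorm_eq_nnnorm, Real.enorm_eq_ofReal_abs]
    rw [this]
    exact h2.ne
  have hmain := main_lin (t := t) ha0 hab ht hp hq hpq1 hknn hk1 hkm hftil hbd
  rw [hL, hR]
  have hRne : (∫⁻ z, ENNReal.ofReal |ftil z| ∂μΩ) ≠ ⊤ := by rw [hcongr]; exact hfin
  calc (∫⁻ z, ENNReal.ofReal |ftil (z.1 - t * z.2, z.2)| ∂μΩ).toReal
      ≤ ((ENNReal.ofReal (p + q)) ^ (⌊t * a⌋₊)
          * ∫⁻ z, ENNReal.ofReal |ftil z| ∂μΩ).toReal := by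
        apply ENNReal.toReal_mono
        · exact ENNReal.mul_ne_top (ENNReal.pow_ne_top ENNReal.ofReal_ne_top) hRne
        · exact hmain
    _ = (p + q) ^ (⌊t * a⌋₊) * (∫⁻ z, ENNReal.ofReal |f z| ∂μΩ).toReal := by
        rw [hcongr, ENNReal.toReal_mul, ENNReal.toReal_pow,
          ENNReal.toReal_ofReal (by linarith : (0:ℝ) ≤ p + q)]

theorem stmt12
    (a b p q : ℝ) (ha : 0 ≤ a) (hab : a < b)
    (hp : 0 ≤ p) (hq : 0 ≤ q) (hpq : 0 < p + q)
    (k : ℝ → ℝ → ℝ) (hkm : Measurable (Function.uncurry k))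
    (hknn : ∀ w v : ℝ, 0 ≤ k w v)
    (hk1 : ∀ w ∈ Set.Ioo a b, ∫ v in Set.Ioo a b, k w v = 1)
    (ha0 : 0 < a) (hpq1 : p + q < 1)
    (t : ℝ) (ht : a⁻¹ ≤ t)
    (f ftil : ℝ × ℝ → ℝ)
    (hf : IntegrableOn f ((Set.Ioo (0 : ℝ) 1) ×ˢ Set.Ioo a b)
      ((volume : Measure ℝ).prod (volume : Measure ℝ)))
    (hext : IsBoundaryExtension b p q k volume (Set.Ioo a b) f ftil) :
    ∫ z in (Set.Ioo (0 : ℝ) 1) ×ˢ Set.Ioo a b, |ftil (z.1 - t * z.2, z.2)|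
        ∂((volume : Measure ℝ).prod (volume : Measure ℝ))
      ≤ (p + q) ^ (⌊t * a⌋₊) *
        ∫ z in (Set.Ioo (0 : ℝ) 1) ×ˢ Set.Ioo a b, |f z|
          ∂((volume : Measure ℝ).prod (volume : Measure ℝ)) := by
  unfold IsBoundaryExtension at hext
  obtain ⟨hftil, hGam, hpos, hbd⟩ := hext
  exact Stmt12Aux.main_theorem a b p q ha hab hp hq hpq k hkm hknn hk1 ha0 hpq1 t ht
    f ftil hf hftil hpos hbd
end

section
/- Assume p + q < 1. Then for every f ∈ L¹(Ω,μ) with boundary extension f̃, lim_{t → +∞} ∫_Ω |f̃(x − tv, v)| μ(d(x,v)) = 0. -/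
open MeasureTheory Set Filter Topology

open scoped ENNReal NNReal


noncomputable def shear (r s : ℝ) : (ℝ × ℝ) ≃ᵐ (ℝ × ℝ) where
  toFun z := (z.1 + r + s * z.2, z.2)
  invFun z := (z.1 - r - s * z.2, z.2)
  left_inv z := by simp; ring_nf
  right_inv z := by simp; ring_nf
  measurable_toFun := by
    show Measurable fun z : ℝ × ℝ => (z.1 + r + s * z.2, z.2); fun_prop
  measurable_invFun := by
    show Measurable fun z : ℝ × ℝ => (z.1 - r - s * z.2, z.2); fun_prop

lemma shear_mp (ν : Measure ℝ) [SigmaFinite ν] (r s : ℝ) :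
    MeasurePreserving (shear r s) ((volume : Measure ℝ).prod ν) ((volume : Measure ℝ).prod ν) := by
  refine ⟨(shear r s).measurable, ?_⟩
  refine Measure.ext fun A hA => ?_
  rw [Measure.map_apply (shear r s).measurable hA,
    Measure.prod_apply_symm (hA.preimage (shear r s).measurable), Measure.prod_apply_symm hA]
  refine lintegral_congr fun v => ?_
  have h : (fun x => (x, v)) ⁻¹' (shear r s ⁻¹' A)
      = (fun x => x + (r + s * v)) ⁻¹' ((fun x => (x, v)) ⁻¹' A) := by
    ext x; simp [shear, add_assoc]
  rw [h, measure_preimage_add_right]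

lemma sub1d (G : ℝ → ℝ≥0∞) (hG : Measurable G) {c : ℝ} (hc : 0 < c) (A : ℝ) :
    ∫⁻ x in Set.Ioc A 0, G (1 + x * c) ∂volume
      = ENNReal.ofReal c⁻¹ * ∫⁻ y in Set.Ioc (1 + A * c) 1, G y ∂volume := by
  have hφ : Measurable fun x : ℝ => 1 + x * c := by fun_prop
  have hmap : Measure.map (fun x : ℝ => 1 + x * c) volume
      = (ENNReal.ofReal c⁻¹) • (volume : Measure ℝ) := by
    have h1 : (fun x : ℝ => 1 + x * c) = (fun y : ℝ => 1 + y) ∘ (fun x : ℝ => c * x) := by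
      funext x; simp [mul_comm]
    rw [h1, ← Measure.map_map (by fun_prop) (by fun_prop), Real.map_volume_mul_left hc.ne',
      Measure.map_smul, map_add_left_eq_self volume 1, abs_of_pos (inv_pos.2 hc)]
  have hpre : (fun x : ℝ => 1 + x * c) ⁻¹' (Set.Ioc (1 + A * c) 1) = Set.Ioc A 0 := by
    ext x
    simp only [Set.mem_preimage, Set.mem_Ioc, add_lt_add_iff_left]
    constructor
    · rintro ⟨h1, h2⟩
      constructor
      · exact (mul_lt_mul_iff_of_pos_right hc).1 h1
      · nlinarith
    · rintro ⟨h1, h2⟩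
      constructor
      · exact (mul_lt_mul_iff_of_pos_right hc).2 h1
      · nlinarith
  calc ∫⁻ x in Set.Ioc A 0, G (1 + x * c) ∂volume
      = ∫⁻ x in (fun x : ℝ => 1 + x * c) ⁻¹' (Set.Ioc (1 + A * c) 1), G (1 + x * c) ∂volume := by
        rw [hpre]
    _ = ∫⁻ y in Set.Ioc (1 + A * c) 1, G y ∂(Measure.map (fun x : ℝ => 1 + x * c) volume) := by
        rw [Measure.restrict_map hφ measurableSet_Ioc, lintegral_map hG hφ]
    _ = ENNReal.ofReal c⁻¹ * ∫⁻ y in Set.Ioc (1 + A * c) 1, G y ∂volume := by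
        rw [hmap, Measure.restrict_smul, lintegral_smul_measure, smul_eq_mul]

lemma slice17 (ν : Measure ℝ) [SigmaFinite ν] {V : Set ℝ} (hVm : MeasurableSet V)
    (F : ℝ × ℝ → ℝ≥0∞) (hF : Measurable F)
    (lo : ℝ → ℝ) (hlo : Measurable lo) (hi : ℝ) :
    ∫⁻ z in {z : ℝ × ℝ | z.2 ∈ V ∧ lo z.2 < z.1 ∧ z.1 ≤ hi}, F z ∂((volume : Measure ℝ).prod ν)
      = ∫⁻ v in V, ∫⁻ x in Set.Ioc (lo v) hi, F (x, v) ∂volume ∂ν := by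
  set A : Set (ℝ × ℝ) := {z : ℝ × ℝ | z.2 ∈ V ∧ lo z.2 < z.1 ∧ z.1 ≤ hi} with hA
  have hAm : MeasurableSet A := by
    have : A = (Prod.snd ⁻¹' V) ∩ ({z : ℝ × ℝ | lo z.2 < z.1} ∩ {z : ℝ × ℝ | z.1 ≤ hi}) := by
      ext z; simp [hA, Set.mem_setOf_eq, and_assoc]
    rw [this]
    exact (hVm.preimage measurable_snd).inter
      ((measurableSet_lt (hlo.comp measurable_snd) measurable_fst).inter
        (measurableSet_le measurable_fst measurable_const))
  rw [← lintegral_indicator hAm, lintegral_prod_symm _ ((hF.indicator hAm).aemeasurable),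
    ← lintegral_indicator hVm]
  refine lintegral_congr fun v => ?_
  by_cases hv : v ∈ V
  · rw [Set.indicator_of_mem hv, ← lintegral_indicator measurableSet_Ioc]
    refine lintegral_congr fun x => ?_
    by_cases hx : x ∈ Set.Ioc (lo v) hi
    · rw [Set.indicator_of_mem hx,
        Set.indicator_of_mem (show (x, v) ∈ A from ⟨hv, hx.1, hx.2⟩)]
    · rw [Set.indicator_of_notMem hx,
        Set.indicator_of_notMem (fun h => hx ⟨h.2.1, h.2.2⟩)]
  · rw [Set.indicator_of_notMem hv]
    have h0 : ∀ x : ℝ, A.indicator F (x, v) = 0 := fun x =>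
      Set.indicator_of_notMem (fun h => hv h.1) F
    simp only [h0, lintegral_zero]

lemma key17 (a b p q : ℝ) (ha : 0 ≤ a) (hab : a < b)
    (hp : 0 ≤ p) (hq : 0 ≤ q)
    (V : Set ℝ) (hV : V ⊆ Set.Ioo a b) (hVm : MeasurableSet V)
    (ν : Measure ℝ) [SigmaFinite ν]
    (k : ℝ → ℝ → ℝ) (hkm : Measurable (Function.uncurry k))
    (hknn : ∀ w v : ℝ, 0 ≤ k w v)
    (hk1 : ∀ w ∈ V, ∫ v in V, k w v ∂ν = 1)
    (f ftil : ℝ × ℝ → ℝ)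
    (hext : IsBoundaryExtension b p q k ν V f ftil)
    (hpq1 : p + q < 1) :
    IntegrableOn ftil ((Set.Iio (1 : ℝ)) ×ˢ V) ((volume : Measure ℝ).prod ν) := by
  obtain ⟨hm, hΓ, -, h4⟩ := hext
  set μ : Measure (ℝ × ℝ) := (volume : Measure ℝ).prod ν with hμ
  set g : ℝ × ℝ → ℝ≥0∞ := fun z => (‖ftil z‖₊ : ℝ≥0∞) with hgdef
  have hgm : Measurable g := hm.nnnorm.coe_nnreal_ennreal
  have hb : 0 < b := lt_of_le_of_lt ha hab
  have hVpos : ∀ v ∈ V, 0 < v := fun v hv => lt_of_le_of_lt ha (hV hv).1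
  have hVlt : ∀ v ∈ V, v < b := fun v hv => (hV hv).2
  set lo : ℕ → ℝ → ℝ := fun j v => -((j : ℝ) * v * b⁻¹) with hlodef
  have hlom : ∀ j, Measurable (lo j) := fun j => by fun_prop
  set S : ℕ → Set (ℝ × ℝ) := fun j => {z : ℝ × ℝ | z.2 ∈ V ∧ lo j z.2 < z.1 ∧ z.1 ≤ 0}
    with hSdef
  set S' : ℕ → Set (ℝ × ℝ) := fun j => {z : ℝ × ℝ | z.2 ∈ V ∧ 1 + lo j z.2 < z.1 ∧ z.1 ≤ 1}
    with hS'def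
  set B : ℕ → ℝ≥0∞ := fun j => ∫⁻ z in S j, g z ∂μ with hBdef
  set C : ℝ≥0∞ := ∫⁻ z in (Set.Ioo (0 : ℝ) 1) ×ˢ V, g z ∂μ with hCdef
  have hSm : ∀ j, MeasurableSet (S j) := by
    intro j
    have : S j = (Prod.snd ⁻¹' V) ∩
        ({z : ℝ × ℝ | lo j z.2 < z.1} ∩ {z : ℝ × ℝ | z.1 ≤ 0}) := by
      ext z; simp [hSdef, Set.mem_setOf_eq, and_assoc]
    rw [this]
    exact (hVm.preimage measurable_snd).inter
      ((measurableSet_lt ((hlom j).comp measurable_snd) measurable_fst).inter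
        (measurableSet_le measurable_fst measurable_const))
  have hS'm : ∀ j, MeasurableSet (S' j) := by
    intro j
    have : S' j = (Prod.snd ⁻¹' V) ∩
        ({z : ℝ × ℝ | 1 + lo j z.2 < z.1} ∩ {z : ℝ × ℝ | z.1 ≤ 1}) := by
      ext z; simp [hS'def, Set.mem_setOf_eq, and_assoc]
    rw [this]
    exact (hVm.preimage measurable_snd).inter
      ((measurableSet_lt (by fun_prop) measurable_fst).inter
        (measurableSet_le measurable_fst measurable_const))
  -- C is finite
  have hC : C ≠ ⊤ := by
    have hΓ0 : Gam b V 0 = (Set.Ioo (0 : ℝ) 1) ×ˢ V := by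
      simp [Gam, Omi]
    have h0 := hΓ 0
    rw [hΓ0] at h0
    exact h0.2.ne
  -- kernel lintegral
  have hker : ∀ w ∈ V, ∫⁻ v in V, ENNReal.ofReal (k w v) ∂ν = 1 := by
    intro w hw
    have hint : Integrable (fun v => k w v) (ν.restrict V) := by
      by_contra hni
      have := hk1 w hw
      rw [integral_undef hni] at this
      norm_num at this
    rw [← ofReal_integral_eq_lintegral_ofReal hint
      (Filter.Eventually.of_forall fun v => hknn w v), hk1 w hw, ENNReal.ofReal_one]
  -- a.e. bound on S j
  have hae : ∀ j : ℕ, ∀ᵐ z ∂μ.restrict (S j),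
      g z ≤ ∫⁻ w, g (1 + z.1 * w * z.2⁻¹, w) ∂(ell p q k ν V z.2) := by
    intro j
    have hsub : S j ⊆ (Set.Iio (1 : ℝ)) ×ˢ V := fun z hz =>
      ⟨lt_of_le_of_lt hz.2.2 one_pos, hz.1⟩
    have h4' := ae_restrict_of_ae_restrict_of_subset hsub h4
    filter_upwards [h4', ae_restrict_mem (hSm j)] with z hz hzS
    obtain ⟨hint, heq⟩ := hz hzS.2.2
    calc g z = ENNReal.ofReal ‖∫ w, ftil (1 + z.1 * w * z.2⁻¹, w) ∂(ell p q k ν V z.2)‖ := by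
          rw [← heq, hgdef]; exact (ofReal_norm _).symm
      _ ≤ ENNReal.ofReal (∫ w, ‖ftil (1 + z.1 * w * z.2⁻¹, w)‖ ∂(ell p q k ν V z.2)) :=
          ENNReal.ofReal_le_ofReal (norm_integral_le_integral_norm _)
      _ = ∫⁻ w, g (1 + z.1 * w * z.2⁻¹, w) ∂(ell p q k ν V z.2) :=
          ofReal_integral_norm_eq_lintegral_enorm hint
  -- expand the ell-integral
  have hellexp : ∀ z : ℝ × ℝ, z.2 ∈ V →
      ∫⁻ w, g (1 + z.1 * w * z.2⁻¹, w) ∂(ell p q k ν V z.2)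
        = (∫⁻ w in V, ENNReal.ofReal (p * w * z.2⁻¹ * k w z.2) * g (1 + z.1 * w * z.2⁻¹, w) ∂ν)
          + ENNReal.ofReal q * g (1 + z.1, z.2) := by
    intro z hz
    have hzne : z.2 ≠ 0 := (hVpos _ hz).ne'
    have hftm : Measurable fun w => ftil (1 + z.1 * w * z.2⁻¹, w) :=
      hm.comp (by fun_prop)
    have hGm : Measurable fun w => g (1 + z.1 * w * z.2⁻¹, w) := hftm.nnnorm.coe_nnreal_ennreal
    have hk2 : Measurable fun w => k w z.2 :=
      hkm.comp (measurable_id.prodMk measurable_const)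
    have hdens : Measurable fun w => ENNReal.ofReal (p * w * z.2⁻¹ * k w z.2) := by
      apply Measurable.ennreal_ofReal
      exact ((measurable_const.mul measurable_id).mul measurable_const).mul hk2
    rw [ell, lintegral_add_measure, lintegral_smul_measure, lintegral_dirac' _ hGm,
      lintegral_withDensity_eq_lintegral_mul _ hdens hGm]
    have harg : 1 + z.1 * z.2 * z.2⁻¹ = 1 + z.1 := by
      rw [mul_assoc, mul_inv_cancel₀ hzne, mul_one]
    rw [harg]
    rfl
  -- J
  set J : ℕ → ℝ → ℝ≥0∞ :=
    fun j w => ∫⁻ y in Set.Ioc (1 + lo j w) 1, g (y, w) ∂volume with hJdef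
  have hJm : ∀ j, Measurable (J j) := by
    intro j
    have h1 : ∀ w, J j w
        = ∫⁻ y, ({q : ℝ × ℝ | 1 + lo j q.1 < q.2 ∧ q.2 ≤ 1}.indicator
            (fun q => g (q.2, q.1)) (w, y)) ∂volume := by
      intro w
      show (∫⁻ y in Set.Ioc (1 + lo j w) 1, g (y, w) ∂volume) = _
      rw [← lintegral_indicator measurableSet_Ioc]
      refine lintegral_congr fun y => ?_
      by_cases hy : y ∈ Set.Ioc (1 + lo j w) 1
      · rw [Set.indicator_of_mem hy, Set.indicator_of_mem
          (show (w, y) ∈ {q : ℝ × ℝ | 1 + lo j q.1 < q.2 ∧ q.2 ≤ 1} from ⟨hy.1, hy.2⟩)]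
      · rw [Set.indicator_of_notMem hy, Set.indicator_of_notMem
          (fun h : (w, y) ∈ {q : ℝ × ℝ | 1 + lo j q.1 < q.2 ∧ q.2 ≤ 1} => hy ⟨h.1, h.2⟩)]
    have hsm : MeasurableSet {q : ℝ × ℝ | 1 + lo j q.1 < q.2 ∧ q.2 ≤ 1} :=
      (measurableSet_lt (by fun_prop) measurable_snd).inter
        (measurableSet_le measurable_snd measurable_const)
    have h2 : Measurable fun q : ℝ × ℝ =>
        ({q : ℝ × ℝ | 1 + lo j q.1 < q.2 ∧ q.2 ≤ 1}.indicator
          (fun q => g (q.2, q.1)) q) :=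
      (hgm.comp (measurable_snd.prodMk measurable_fst)).indicator hsm
    have heq : J j = fun w => ∫⁻ y, ({q : ℝ × ℝ | 1 + lo j q.1 < q.2 ∧ q.2 ≤ 1}.indicator
        (fun q => g (q.2, q.1)) (w, y)) ∂volume := funext h1
    rw [heq]
    exact h2.lintegral_prod_right'
  -- union bound helper
  have hunion : ∀ s t : Set (ℝ × ℝ), ∫⁻ y in s ∪ t, g y ∂μ
      ≤ ∫⁻ y in s, g y ∂μ + ∫⁻ y in t, g y ∂μ := fun s t =>
    (lintegral_mono' (Measure.restrict_union_le _ _) le_rfl).trans_eq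
      (lintegral_add_measure g _ _)
  -- the S' bound
  have hS'le : ∀ j : ℕ, ∫⁻ y in S' (j + 1), g y ∂μ ≤ C + B j := by
    intro j
    have hone : μ (({(1 : ℝ)} : Set ℝ) ×ˢ V) = 0 := by
      rw [hμ, Measure.prod_prod, Real.volume_singleton, zero_mul]
    have hsub : S' (j + 1) ⊆ (((Set.Ioo (0:ℝ) 1) ×ˢ V ∪ ({(1:ℝ)} : Set ℝ) ×ˢ V)) ∪ S j := by
      rintro z ⟨hzV, hlt, hle⟩
      have hcast : ((j + 1 : ℕ) : ℝ) = (j : ℝ) + 1 := by push_cast; ring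
      have hvb : z.2 * b⁻¹ < 1 := by
        rw [← div_eq_mul_inv]; exact (div_lt_one hb).mpr (hVlt _ hzV)
      have hv0 : 0 < z.2 := hVpos _ hzV
      have hbinv : 0 < b⁻¹ := inv_pos.2 hb
      rcases le_or_gt z.1 0 with h0 | h0
      · right
        refine ⟨hzV, ?_, h0⟩
        have : lo (j+1) z.2 = lo j z.2 - z.2 * b⁻¹ := by
          simp only [hlodef, hcast]; ring
        rw [this] at hlt
        simp only [hlodef]
        linarith
      · left
        rcases lt_or_eq_of_le hle with h1 | h1
        · exact Or.inl ⟨⟨h0, h1⟩, hzV⟩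
        · exact Or.inr ⟨h1, hzV⟩
    calc ∫⁻ y in S' (j + 1), g y ∂μ
        ≤ ∫⁻ y in (((Set.Ioo (0:ℝ) 1) ×ˢ V ∪ ({(1:ℝ)} : Set ℝ) ×ˢ V)) ∪ S j, g y ∂μ :=
          lintegral_mono_set hsub
      _ ≤ (∫⁻ y in ((Set.Ioo (0:ℝ) 1) ×ˢ V ∪ ({(1:ℝ)} : Set ℝ) ×ˢ V), g y ∂μ)
            + ∫⁻ y in S j, g y ∂μ := hunion _ _
      _ ≤ (C + ∫⁻ y in ({(1:ℝ)} : Set ℝ) ×ˢ V, g y ∂μ) + B j := by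
          gcongr
          exact hunion _ _
      _ = C + B j := by rw [setLIntegral_measure_zero _ _ hone, add_zero]
  -- Q part
  have hQeq : ∀ j : ℕ, ∫⁻ z in S (j + 1), g (1 + z.1, z.2) ∂μ
      = ∫⁻ y in S' (j + 1), g y ∂μ := by
    intro j
    have hpre : (shear 1 0) ⁻¹' (S' (j + 1)) = S (j + 1) := by
      ext z
      simp only [Set.mem_preimage, shear, MeasurableEquiv.coe_mk, Equiv.coe_fn_mk,
        hS'def, hSdef, Set.mem_setOf_eq]
      constructor
      · rintro ⟨h1, h2, h3⟩
        exact ⟨h1, by linarith, by linarith⟩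
      · rintro ⟨h1, h2, h3⟩
        exact ⟨h1, by linarith, by linarith⟩
    calc ∫⁻ z in S (j + 1), g (1 + z.1, z.2) ∂μ
        = ∫⁻ z in (shear 1 0) ⁻¹' (S' (j + 1)), g (shear 1 0 z) ∂μ := by
          rw [hpre]
          refine setLIntegral_congr_fun (hSm (j + 1)) (fun z hz => ?_)
          have : ((1 : ℝ) + z.1, z.2) = shear 1 0 z := by
            simp only [shear, MeasurableEquiv.coe_mk, Equiv.coe_fn_mk, Prod.mk.injEq]
            exact ⟨by ring, trivial⟩
          rw [this]
      _ = ∫⁻ y in S' (j + 1), g y ∂μ :=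
          (shear_mp ν 1 0).setLIntegral_comp_preimage_emb
            (shear 1 0).measurableEmbedding g _
  -- P part measurability
  have hPm : Measurable fun z : ℝ × ℝ =>
      ∫⁻ w in V, ENNReal.ofReal (p * w * z.2⁻¹ * k w z.2) * g (1 + z.1 * w * z.2⁻¹, w) ∂ν := by
    have hfun : Measurable fun zw : (ℝ × ℝ) × ℝ =>
        ENNReal.ofReal (p * zw.2 * zw.1.2⁻¹ * k zw.2 zw.1.2)
          * g (1 + zw.1.1 * zw.2 * zw.1.2⁻¹, zw.2) := by
      refine Measurable.fun_mul ?_ ?_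
      · apply Measurable.ennreal_ofReal
        have hkpart : Measurable fun zw : (ℝ × ℝ) × ℝ => k zw.2 zw.1.2 :=
          hkm.comp (measurable_snd.prodMk (measurable_fst.snd))
        exact ((measurable_const.mul measurable_snd).mul
          measurable_fst.snd.inv).mul hkpart
      · exact (hm.comp (by fun_prop :
          Measurable fun zw : (ℝ × ℝ) × ℝ => (1 + zw.1.1 * zw.2 * zw.1.2⁻¹, zw.2))).nnnorm.coe_nnreal_ennreal
    exact hfun.lintegral_prod_right'
  -- P part computation
  have hPeq : ∀ j : ℕ, ∫⁻ z in S (j + 1),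
      (∫⁻ w in V, ENNReal.ofReal (p * w * z.2⁻¹ * k w z.2)
        * g (1 + z.1 * w * z.2⁻¹, w) ∂ν) ∂μ
      = ENNReal.ofReal p * ∫⁻ y in S' (j + 1), g y ∂μ := by
    intro j
    have e1 : ∫⁻ z in S (j + 1),
        (∫⁻ w in V, ENNReal.ofReal (p * w * z.2⁻¹ * k w z.2)
          * g (1 + z.1 * w * z.2⁻¹, w) ∂ν) ∂μ
        = ∫⁻ v in V, ∫⁻ x in Set.Ioc (lo (j + 1) v) 0,
            (∫⁻ w in V, ENNReal.ofReal (p * w * v⁻¹ * k w v)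
              * g (1 + x * w * v⁻¹, w) ∂ν) ∂volume ∂ν :=
      slice17 ν hVm _ hPm (lo (j + 1)) (hlom _) 0
    rw [e1]
    have hinner : ∀ v ∈ V, ∫⁻ x in Set.Ioc (lo (j + 1) v) 0,
        (∫⁻ w in V, ENNReal.ofReal (p * w * v⁻¹ * k w v)
          * g (1 + x * w * v⁻¹, w) ∂ν) ∂volume
        = ∫⁻ w in V, ENNReal.ofReal (p * k w v) * J (j + 1) w ∂ν := by
      intro v hv
      have hv0 : 0 < v := hVpos v hv
      have hswapm : AEMeasurable (Function.uncurry fun x w =>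
          ENNReal.ofReal (p * w * v⁻¹ * k w v) * g (1 + x * w * v⁻¹, w))
          ((volume.restrict (Set.Ioc (lo (j + 1) v) 0)).prod (ν.restrict V)) := by
        refine Measurable.aemeasurable ?_
        refine Measurable.fun_mul ?_ ?_
        · apply Measurable.ennreal_ofReal
          have : Measurable fun xw : ℝ × ℝ => k xw.2 v :=
            hkm.comp (measurable_snd.prodMk measurable_const)
          exact ((measurable_const.mul measurable_snd).mul measurable_const).mul this
        · exact (hm.comp (by fun_prop :
            Measurable fun xw : ℝ × ℝ => (1 + xw.1 * xw.2 * v⁻¹, xw.2))).nnnorm.coe_nnreal_ennreal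
      rw [lintegral_lintegral_swap hswapm]
      refine setLIntegral_congr_fun hVm (fun w hw => ?_)
      have hw0 : 0 < w := hVpos w hw
      have hc : 0 < w * v⁻¹ := by positivity
      have hgc : Measurable fun x : ℝ => g (1 + x * (w * v⁻¹), w) :=
        (hm.comp (by fun_prop :
          Measurable fun x : ℝ => (1 + x * (w * v⁻¹), w))).nnnorm.coe_nnreal_ennreal
      have hx : (fun x : ℝ => ENNReal.ofReal (p * w * v⁻¹ * k w v)
          * g (1 + x * w * v⁻¹, w))
          = fun x : ℝ => ENNReal.ofReal (p * w * v⁻¹ * k w v)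
            * g (1 + x * (w * v⁻¹), w) := by
        funext x
        have : (1 : ℝ) + x * w * v⁻¹ = 1 + x * (w * v⁻¹) := by ring
        rw [this]
      rw [hx, lintegral_const_mul _ hgc,
        sub1d (fun y => g (y, w)) (hm.comp (by fun_prop :
          Measurable fun y : ℝ => (y, w))).nnnorm.coe_nnreal_ennreal hc (lo (j + 1) v)]
      have harg0 : 1 + lo (j + 1) v * (w * v⁻¹) = 1 + lo (j + 1) w := by
        simp only [hlodef]
        field_simp
      rw [harg0, ← mul_assoc, ← ENNReal.ofReal_mul
        (mul_nonneg (mul_nonneg (mul_nonneg hp hw0.le) (inv_nonneg.2 hv0.le)) (hknn w v))]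
      have hcoef : p * w * v⁻¹ * k w v * (w * v⁻¹)⁻¹ = p * k w v := by
        field_simp
      rw [hcoef]
    rw [setLIntegral_congr_fun hVm hinner]
    have hswap2 : AEMeasurable (Function.uncurry fun v w =>
        ENNReal.ofReal (p * k w v) * J (j + 1) w)
        ((ν.restrict V).prod (ν.restrict V)) := by
      refine Measurable.aemeasurable (Measurable.fun_mul ?_ ?_)
      · exact (hkm.comp (measurable_snd.prodMk measurable_fst)).const_mul p
          |>.ennreal_ofReal
      · exact (hJm (j + 1)).comp measurable_snd
    rw [lintegral_lintegral_swap hswap2]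
    have hper : ∀ w ∈ V, ∫⁻ v in V, ENNReal.ofReal (p * k w v) * J (j + 1) w ∂ν
        = ENNReal.ofReal p * J (j + 1) w := by
      intro w hw
      have hkv : Measurable fun v => ENNReal.ofReal (p * k w v) :=
        ((hkm.comp (measurable_const.prodMk measurable_id)).const_mul p).ennreal_ofReal
      rw [lintegral_mul_const _ hkv]
      have : ∫⁻ v in V, ENNReal.ofReal (p * k w v) ∂ν = ENNReal.ofReal p := by
        have hr : (fun v => ENNReal.ofReal (p * k w v))
            = fun v => ENNReal.ofReal p * ENNReal.ofReal (k w v) := by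
          funext v; rw [ENNReal.ofReal_mul hp]
        rw [hr, lintegral_const_mul _ (by
          exact (hkm.comp (measurable_const.prodMk measurable_id)).ennreal_ofReal),
          hker w hw, mul_one]
      rw [this]
    rw [setLIntegral_congr_fun hVm hper,
      lintegral_const_mul _ (hJm (j + 1))]
    congr 1
    exact (slice17 ν hVm g hgm (fun v => 1 + lo (j + 1) v) (by fun_prop) 1).symm
  -- main recursive step
  have hstep : ∀ j : ℕ, B (j + 1) ≤ ENNReal.ofReal (p + q) * (C + B j) := by
    intro j
    have hQm : Measurable fun z : ℝ × ℝ => g (1 + z.1, z.2) :=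
      (hm.comp (by fun_prop : Measurable fun z : ℝ × ℝ => (1 + z.1, z.2))).nnnorm.coe_nnreal_ennreal
    have h1 : B (j + 1) ≤ ∫⁻ z in S (j + 1),
        ((∫⁻ w in V, ENNReal.ofReal (p * w * z.2⁻¹ * k w z.2)
            * g (1 + z.1 * w * z.2⁻¹, w) ∂ν)
          + ENNReal.ofReal q * g (1 + z.1, z.2)) ∂μ := by
      refine lintegral_mono_ae ?_
      filter_upwards [hae (j + 1), ae_restrict_mem (hSm (j + 1))] with z h1 h2
      rw [← hellexp z h2.1]
      exact h1
    rw [lintegral_add_left hPm] at h1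
    calc B (j + 1)
        ≤ (∫⁻ z in S (j + 1), (∫⁻ w in V, ENNReal.ofReal (p * w * z.2⁻¹ * k w z.2)
            * g (1 + z.1 * w * z.2⁻¹, w) ∂ν) ∂μ)
          + ∫⁻ z in S (j + 1), ENNReal.ofReal q * g (1 + z.1, z.2) ∂μ := h1
      _ = ENNReal.ofReal p * (∫⁻ y in S' (j + 1), g y ∂μ)
          + ENNReal.ofReal q * (∫⁻ y in S' (j + 1), g y ∂μ) := by
          rw [hPeq j, lintegral_const_mul _ hQm, hQeq j]
      _ ≤ ENNReal.ofReal p * (C + B j) + ENNReal.ofReal q * (C + B j) := by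
          gcongr <;> exact hS'le j
      _ = ENNReal.ofReal (p + q) * (C + B j) := by
          rw [← add_mul, ← ENNReal.ofReal_add hp hq]
  -- geometric bound
  set r : ℝ := p + q with hrdef
  have hr0 : 0 ≤ r := by positivity
  set X : ℝ≥0∞ := ENNReal.ofReal (r / (1 - r)) * C with hXdef
  have hBX : ∀ j, B j ≤ X := by
    intro j
    induction j with
    | zero =>
      have hS0 : S 0 = ∅ := by
        ext z
        simp only [hSdef, Set.mem_setOf_eq, Set.mem_empty_iff_false, iff_false, not_and]
        intro _ h1 h2
        simp only [hlodef, Nat.cast_zero, zero_mul, neg_zero] at h1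
        linarith
      have : B 0 = 0 := by
        rw [hBdef]
        show (∫⁻ z in S 0, g z ∂μ) = 0
        rw [hS0, Measure.restrict_empty, lintegral_zero_measure]
      rw [this]
      exact zero_le
    | succ j ih =>
      have h2 : B (j + 1) ≤ ENNReal.ofReal r * (C + X) :=
        (hstep j).trans (by gcongr)
      have h3 : ENNReal.ofReal r * (C + X) = X := by
        have h1r : (0 : ℝ) < 1 - r := by linarith
        have e1 : ENNReal.ofReal r * (C + X)
            = ENNReal.ofReal (r + r * (r / (1 - r))) * C := by
          rw [ENNReal.ofReal_add hr0 (by positivity), ENNReal.ofReal_mul hr0,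
            add_mul, hXdef, mul_add, mul_assoc]
        rw [e1]
        congr 2
        field_simp
        ring
      exact h2.trans_eq h3
  have hX : X ≠ ⊤ := ENNReal.mul_ne_top ENNReal.ofReal_ne_top hC
  -- the negative part
  have hneg : ∫⁻ z in (Set.Iic (0 : ℝ)) ×ˢ V, g z ∂μ ≤ X := by
    have hmono : Monotone fun j => (S j).indicator g := by
      intro i j hij
      have hsub : S i ⊆ S j := by
        rintro z ⟨h1, h2, h3⟩
        refine ⟨h1, ?_, h3⟩
        have hv0 : (0 : ℝ) ≤ z.2 := (hVpos _ h1).le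
        have hci : ((i : ℝ)) ≤ (j : ℝ) := Nat.cast_le.2 hij
        have := mul_le_mul_of_nonneg_right
          (mul_le_mul_of_nonneg_right hci hv0) (inv_nonneg.2 hb.le)
        simp only [hlodef] at h2 ⊢
        linarith
      exact Set.indicator_le_indicator_of_subset hsub (fun _ => zero_le)
    have hrw : ∫⁻ z in (Set.Iic (0 : ℝ)) ×ˢ V, g z ∂μ = ⨆ j, B j := by
      calc ∫⁻ z in (Set.Iic (0 : ℝ)) ×ˢ V, g z ∂μ
          = ∫⁻ z in (Set.Iic (0 : ℝ)) ×ˢ V, (⨆ j, (S j).indicator g z) ∂μ := by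
            refine setLIntegral_congr_fun (measurableSet_Iic.prod hVm)
              (fun z hz => ?_)
            obtain ⟨hz1, hz2⟩ := hz
            have hv0 : 0 < z.2 := hVpos _ hz2
            obtain ⟨j, hj⟩ := exists_nat_gt ((-z.1) * b / z.2)
            have hjz : -z.1 * b < (j : ℝ) * z.2 := by
              rwa [div_lt_iff₀ hv0] at hj
            have hmem : z ∈ S j := by
              refine ⟨hz2, ?_, hz1⟩
              simp only [hlodef]
              have h3 : (-z.1 * b) * b⁻¹ < ((j : ℝ) * z.2) * b⁻¹ :=
                mul_lt_mul_of_pos_right hjz (inv_pos.2 hb)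
              rw [mul_assoc, mul_assoc, mul_inv_cancel₀ hb.ne', mul_one] at h3
              linarith [h3]
            refine (le_antisymm (iSup_le fun i => ?_) (le_iSup_of_le j ?_)).symm
            · exact Set.indicator_le_self _ _ z
            · rw [Set.indicator_of_mem hmem]
        _ = ⨆ j, ∫⁻ z in (Set.Iic (0 : ℝ)) ×ˢ V, (S j).indicator g z ∂μ :=
            lintegral_iSup' (fun j => (hgm.indicator (hSm j)).aemeasurable)
              (ae_of_all _ fun z i j hij => hmono hij z)
        _ = ⨆ j, B j := by
            refine iSup_congr fun j => ?_
            rw [lintegral_indicator (hSm j), Measure.restrict_restrict (hSm j)]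
            have : S j ∩ (Set.Iic (0 : ℝ)) ×ˢ V = S j := by
              refine Set.inter_eq_left.mpr fun z hz => ⟨hz.2.2, hz.1⟩
            rw [this]
    rw [hrw]
    exact iSup_le hBX
  -- conclude
  refine ⟨hm.aestronglyMeasurable, ?_⟩
  have hsplit : (Set.Iio (1 : ℝ)) ×ˢ V ⊆ ((Set.Iic (0 : ℝ)) ×ˢ V) ∪ ((Set.Ioo (0 : ℝ) 1) ×ˢ V) := by
    rintro z ⟨h1, h2⟩
    rcases le_or_gt z.1 0 with h0 | h0
    · exact Or.inl ⟨h0, h2⟩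
    · exact Or.inr ⟨⟨h0, h1⟩, h2⟩
  have hfin : ∫⁻ z in (Set.Iio (1 : ℝ)) ×ˢ V, g z ∂μ < ⊤ := by
    calc ∫⁻ z in (Set.Iio (1 : ℝ)) ×ˢ V, g z ∂μ
        ≤ ∫⁻ z in ((Set.Iic (0 : ℝ)) ×ˢ V) ∪ ((Set.Ioo (0 : ℝ) 1) ×ˢ V), g z ∂μ :=
          lintegral_mono_set hsplit
      _ ≤ (∫⁻ z in (Set.Iic (0 : ℝ)) ×ˢ V, g z ∂μ) + ∫⁻ z in (Set.Ioo (0 : ℝ) 1) ×ˢ V, g z ∂μ :=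
          hunion _ _
      _ ≤ X + C := by gcongr
      _ < ⊤ := ENNReal.add_lt_top.2 ⟨hX.lt_top, hC.lt_top⟩
  exact hfin

theorem stmt14
    (a b p q : ℝ) (ha : 0 ≤ a) (hab : a < b)
    (hp : 0 ≤ p) (hq : 0 ≤ q) (hpq : 0 < p + q)
    (V : Set ℝ) (hV : V ⊆ Set.Ioo a b) (hVm : MeasurableSet V)
    (ν : Measure ℝ) [SigmaFinite ν]
    (k : ℝ → ℝ → ℝ) (hkm : Measurable (Function.uncurry k))
    (hknn : ∀ w v : ℝ, 0 ≤ k w v)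
    (hk1 : ∀ w ∈ V, ∫ v in V, k w v ∂ν = 1)
    (f ftil : ℝ × ℝ → ℝ)
    (hf : IntegrableOn f ((Set.Ioo (0 : ℝ) 1) ×ˢ V) ((volume : Measure ℝ).prod ν))
    (hext : IsBoundaryExtension b p q k ν V f ftil)
    (hpq1 : p + q < 1) :
    Tendsto
      (fun t : ℝ =>
        ∫ z in (Set.Ioo (0 : ℝ) 1) ×ˢ V, |ftil (z.1 - t * z.2, z.2)|
          ∂((volume : Measure ℝ).prod ν))
      atTop (𝓝 0) := by
  have hm : Measurable ftil := hext.1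
  have hb : 0 < b := lt_of_le_of_lt ha hab
  have hVpos : ∀ v ∈ V, 0 < v := fun v hv => lt_of_le_of_lt ha (hV hv).1
  have hInt : IntegrableOn ftil ((Set.Iio (1 : ℝ)) ×ˢ V) ((volume : Measure ℝ).prod ν) :=
    key17 a b p q ha hab hp hq V hV hVm ν k hkm hknn hk1 f ftil hext hpq1
  set Bt : ℝ → Set (ℝ × ℝ) :=
    fun t => {z : ℝ × ℝ | z.2 ∈ V ∧ -(t * z.2) < z.1 ∧ z.1 < 1 - t * z.2} with hBtdef
  have hBtm : ∀ t, MeasurableSet (Bt t) := by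
    intro t
    have : Bt t = (Prod.snd ⁻¹' V) ∩
        ({z : ℝ × ℝ | -(t * z.2) < z.1} ∩ {z : ℝ × ℝ | z.1 < 1 - t * z.2}) := by
      ext z; simp [hBtdef, Set.mem_setOf_eq, and_assoc]
    rw [this]
    exact (hVm.preimage measurable_snd).inter
      ((measurableSet_lt (by fun_prop) measurable_fst).inter
        (measurableSet_lt measurable_fst (by fun_prop)))
  have hBtsub : ∀ t : ℝ, 0 ≤ t → Bt t ⊆ (Set.Iio (1 : ℝ)) ×ˢ V := by
    rintro t ht z ⟨h1, h2, h3⟩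
    have hv0 : 0 < z.2 := hVpos _ h1
    have : 0 ≤ t * z.2 := mul_nonneg ht hv0.le
    exact ⟨by simp only [Set.mem_Iio]; linarith, h1⟩
  -- the two expressions agree for t ≥ 0
  have heq : ∀ t : ℝ, 0 ≤ t →
      ∫ z in (Set.Ioo (0 : ℝ) 1) ×ˢ V, |ftil (z.1 - t * z.2, z.2)| ∂((volume : Measure ℝ).prod ν)
        = ∫ y in (Set.Iio (1 : ℝ)) ×ˢ V, (Bt t).indicator (fun y => |ftil y|) y ∂((volume : Measure ℝ).prod ν) := by
    intro t ht
    have hpre : (shear 0 (-t)) ⁻¹' (Bt t) = (Set.Ioo (0 : ℝ) 1) ×ˢ V := by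
      ext z
      simp only [Set.mem_preimage, shear, MeasurableEquiv.coe_mk, Equiv.coe_fn_mk,
        hBtdef, Set.mem_setOf_eq, Set.mem_prod, Set.mem_Ioo]
      constructor
      · rintro ⟨h1, h2, h3⟩
        exact ⟨⟨by linarith, by linarith⟩, h1⟩
      · rintro ⟨⟨h1, h2⟩, h3⟩
        exact ⟨h3, by linarith, by linarith⟩
    calc ∫ z in (Set.Ioo (0 : ℝ) 1) ×ˢ V, |ftil (z.1 - t * z.2, z.2)| ∂((volume : Measure ℝ).prod ν)
        = ∫ z in (shear 0 (-t)) ⁻¹' (Bt t), |ftil (shear 0 (-t) z)| ∂((volume : Measure ℝ).prod ν) := by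
          rw [hpre]
          refine setIntegral_congr_fun ((measurableSet_Ioo).prod hVm) fun z hz => ?_
          have : (z.1 - t * z.2, z.2) = shear 0 (-t) z := by
            simp only [shear, MeasurableEquiv.coe_mk, Equiv.coe_fn_mk, Prod.mk.injEq]
            exact ⟨by ring, trivial⟩
          rw [this]
      _ = ∫ y in Bt t, |ftil y| ∂((volume : Measure ℝ).prod ν) :=
          (shear_mp ν 0 (-t)).setIntegral_preimage_emb
            (shear 0 (-t)).measurableEmbedding (fun y => |ftil y|) (Bt t)
      _ = ∫ y in (Set.Iio (1 : ℝ)) ×ˢ V, (Bt t).indicator (fun y => |ftil y|) y ∂((volume : Measure ℝ).prod ν) := by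
          rw [setIntegral_indicator (hBtm t),
            Set.inter_eq_right.mpr (hBtsub t ht)]
  -- dominated convergence
  have hTend : Tendsto (fun t : ℝ =>
      ∫ y in (Set.Iio (1 : ℝ)) ×ˢ V, (Bt t).indicator (fun y => |ftil y|) y ∂((volume : Measure ℝ).prod ν))
      atTop (𝓝 0) := by
    have h0 : (0 : ℝ) = ∫ y in (Set.Iio (1 : ℝ)) ×ˢ V, (0 : ℝ × ℝ → ℝ) y ∂((volume : Measure ℝ).prod ν) := by
      simp
    rw [h0]
    refine tendsto_integral_filter_of_dominated_convergence (fun y => |ftil y|)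
      ?_ ?_ ?_ ?_
    · exact Filter.Eventually.of_forall fun t =>
        ((hm.abs).indicator (hBtm t)).aestronglyMeasurable
    · refine Filter.Eventually.of_forall fun t => ae_of_all _ fun y => ?_
      by_cases hy : y ∈ Bt t
      · rw [Set.indicator_of_mem hy]
        simp [abs_abs]
      · rw [Set.indicator_of_notMem hy]
        simp [abs_nonneg]
    · exact hInt.abs
    · filter_upwards [ae_restrict_mem (measurableSet_Iio.prod hVm)] with y hy
      have hv0 : 0 < y.2 := hVpos _ hy.2
      refine Tendsto.congr' ?_ tendsto_const_nhds
      filter_upwards [eventually_ge_atTop ((1 - y.1) / y.2)] with t ht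
      refine (Set.indicator_of_notMem ?_ _).symm
      rintro ⟨-, -, h3⟩
      have : 1 - y.1 ≤ t * y.2 := by
        rwa [div_le_iff₀ hv0] at ht
      linarith
  exact Tendsto.congr' (by
    filter_upwards [eventually_ge_atTop (0 : ℝ)] with t ht
    exact (heq t ht).symm) hTend
end

section
/- Assume V = (a,b) with ν the Lebesgue measure and p + q = 1. Let f_⋄ ∈ L¹(V) satisfy f_⋄ ≥ 0 a.e., ∫_V f_⋄(v) dv = 1, and f_⋄(v) = ∫_V k(w,v) f_⋄(w) dw for a.e. v ∈ V, and assume the function v ↦ v⁻¹ f_⋄(v) is integrable on V. Define f_* : Ω → ℝ by f_*(x,v) = v⁻¹ f_⋄(v) / ∫_V w⁻¹ f_⋄(w) dw. Then f_* is a density in L¹(Ω,μ) (f_* ≥ 0 a.e. and ∫_Ω f_* dμ = 1) and T(t) f_* = f_* μ-a.e. on Ω for every t ∈ [0, b⁻¹]. -/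
open MeasureTheory Set Filter Topology
open scoped NNReal ENNReal

/-- The operator `T(t)` (for `t ∈ [0, b⁻¹]`):
`T(t)f(x,v) = f(x − tv, v)` if `x > tv`, and
`T(t)f(x,v) = ∫_V f(1 + x w v⁻¹ − t w, w) ℓ(dw,v)` if `x ≤ tv`. -/
noncomputable def Tt (p q : ℝ) (k : ℝ → ℝ → ℝ) (ν : Measure ℝ) (V : Set ℝ) (t : ℝ)
    (f : ℝ × ℝ → ℝ) : ℝ × ℝ → ℝ :=
  fun z =>
    if t * z.2 < z.1 then f (z.1 - t * z.2, z.2)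
    else ∫ w, f (1 + z.1 * w * z.2⁻¹ - t * w, w) ∂(ell p q k ν V z.2)

theorem stmt15
    (a b p q : ℝ) (ha : 0 ≤ a) (hab : a < b)
    (hp : 0 ≤ p) (hq : 0 ≤ q) (hpq : 0 < p + q)
    (k : ℝ → ℝ → ℝ) (hkm : Measurable (Function.uncurry k))
    (hknn : ∀ w v : ℝ, 0 ≤ k w v)
    (hk1 : ∀ w ∈ Set.Ioo a b, ∫ v in Set.Ioo a b, k w v = 1)
    (hpq1 : p + q = 1)
    (fd : ℝ → ℝ) (hfdm : Measurable fd)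
    (hfdnn : ∀ᵐ v ∂((volume : Measure ℝ).restrict (Set.Ioo a b)), 0 ≤ fd v)
    (hfdint : IntegrableOn fd (Set.Ioo a b))
    (hfd1 : ∫ v in Set.Ioo a b, fd v = 1)
    (hfdstat : ∀ᵐ v ∂((volume : Measure ℝ).restrict (Set.Ioo a b)),
      fd v = ∫ w in Set.Ioo a b, k w v * fd w)
    (hfdinv : IntegrableOn (fun v : ℝ => v⁻¹ * fd v) (Set.Ioo a b))
    (fstar : ℝ × ℝ → ℝ)
    (hfstar : ∀ z : ℝ × ℝ,
      fstar z = z.2⁻¹ * fd z.2 / ∫ w in Set.Ioo a b, w⁻¹ * fd w) :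
    IntegrableOn fstar ((Set.Ioo (0 : ℝ) 1) ×ˢ Set.Ioo a b)
        ((volume : Measure ℝ).prod (volume : Measure ℝ)) ∧
    (∀ᵐ z ∂(((volume : Measure ℝ).prod (volume : Measure ℝ)).restrict
        ((Set.Ioo (0 : ℝ) 1) ×ˢ Set.Ioo a b)), 0 ≤ fstar z) ∧
    (∫ z in (Set.Ioo (0 : ℝ) 1) ×ˢ Set.Ioo a b, fstar z
        ∂((volume : Measure ℝ).prod (volume : Measure ℝ)) = 1) ∧
    (∀ t : ℝ, 0 ≤ t → t ≤ b⁻¹ →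
      ∀ᵐ z ∂(((volume : Measure ℝ).prod (volume : Measure ℝ)).restrict
          ((Set.Ioo (0 : ℝ) 1) ×ˢ Set.Ioo a b)),
        Tt p q k volume (Set.Ioo a b) t fstar z = fstar z) := by
  have hb : (0:ℝ) < b := lt_of_le_of_lt ha hab
  set C : ℝ := ∫ w in Set.Ioo a b, w⁻¹ * fd w with hCdef
  -- positivity of C
  have hbinv : (0:ℝ) < b⁻¹ := inv_pos.2 hb
  have hble : b⁻¹ ≤ C := by
    have h1 : ∫ v in Set.Ioo a b, b⁻¹ * fd v = b⁻¹ := by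
      rw [integral_const_mul, hfd1, mul_one]
    rw [← h1]
    refine integral_mono_ae (hfdint.const_mul b⁻¹) hfdinv ?_
    filter_upwards [hfdnn, ae_restrict_mem measurableSet_Ioo] with v h0 hv
    have hv0 : 0 < v := lt_of_le_of_lt ha hv.1
    have : b⁻¹ ≤ v⁻¹ := by
      apply inv_anti₀ hv0 hv.2.le
    exact mul_le_mul_of_nonneg_right this h0
  have hC : 0 < C := lt_of_lt_of_le hbinv hble
  -- the function of the second variable
  set h : ℝ → ℝ := fun w => w⁻¹ * fd w / C with hhdef
  have hh_meas : Measurable h := (measurable_inv.mul hfdm).div_const C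
  have hh_int : IntegrableOn h (Set.Ioo a b) := hfdinv.div_const C
  have hfse : fstar = fun z : ℝ × ℝ => (fun _ : ℝ => (1:ℝ)) z.1 * h z.2 := by
    funext z
    rw [hfstar z]
    simp [hhdef]
  have h1int : Integrable (fun _ : ℝ => (1:ℝ))
      ((volume : Measure ℝ).restrict (Set.Ioo (0:ℝ) 1)) := by
    rw [← IntegrableOn]
    refine integrableOn_const ?_
    simp [Real.volume_Ioo]
  have hprodint : Integrable (fun z : ℝ × ℝ => (fun _ : ℝ => (1:ℝ)) z.1 * h z.2)
      (((volume : Measure ℝ).restrict (Set.Ioo (0:ℝ) 1)).prod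
        ((volume : Measure ℝ).restrict (Set.Ioo a b))) :=
    Integrable.mul_prod h1int hh_int
  have hIntOn : IntegrableOn fstar ((Set.Ioo (0 : ℝ) 1) ×ˢ Set.Ioo a b)
      ((volume : Measure ℝ).prod (volume : Measure ℝ)) := by
    rw [IntegrableOn, ← Measure.prod_restrict, hfse]
    exact hprodint
  -- nonnegativity, a.e. lifted along the second projection
  have hnnV : ∀ᵐ v ∂(volume : Measure ℝ), v ∈ Set.Ioo a b → 0 ≤ fd v :=
    (ae_restrict_iff' measurableSet_Ioo).1 hfdnn
  have hstV : ∀ᵐ v ∂(volume : Measure ℝ), v ∈ Set.Ioo a b →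
      fd v = ∫ w in Set.Ioo a b, k w v * fd w :=
    (ae_restrict_iff' measurableSet_Ioo).1 hfdstat
  have hsndnn : ∀ᵐ z : ℝ × ℝ ∂((volume : Measure ℝ).prod (volume : Measure ℝ)),
      z.2 ∈ Set.Ioo a b → 0 ≤ fd z.2 :=
    Measure.quasiMeasurePreserving_snd.ae hnnV
  have hsndst : ∀ᵐ z : ℝ × ℝ ∂((volume : Measure ℝ).prod (volume : Measure ℝ)),
      z.2 ∈ Set.Ioo a b → fd z.2 = ∫ w in Set.Ioo a b, k w z.2 * fd w :=
    Measure.quasiMeasurePreserving_snd.ae hstV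
  have hmemae : ∀ᵐ z : ℝ × ℝ ∂(((volume : Measure ℝ).prod (volume : Measure ℝ)).restrict
      ((Set.Ioo (0 : ℝ) 1) ×ˢ Set.Ioo a b)), z ∈ (Set.Ioo (0 : ℝ) 1) ×ˢ Set.Ioo a b :=
    ae_restrict_mem (measurableSet_Ioo.prod measurableSet_Ioo)
  have hnn : ∀ᵐ z ∂(((volume : Measure ℝ).prod (volume : Measure ℝ)).restrict
      ((Set.Ioo (0 : ℝ) 1) ×ˢ Set.Ioo a b)), 0 ≤ fstar z := by
    filter_upwards [ae_restrict_of_ae hsndnn, hmemae] with z hz hmem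
    have hz2 := hmem.2
    have hv0 : 0 < z.2 := lt_of_le_of_lt ha hz2.1
    rw [hfstar z]
    exact div_nonneg (mul_nonneg (inv_nonneg.2 hv0.le) (hz hz2)) hC.le
  -- total mass one
  have hmass : ∫ z in (Set.Ioo (0 : ℝ) 1) ×ˢ Set.Ioo a b, fstar z
      ∂((volume : Measure ℝ).prod (volume : Measure ℝ)) = 1 := by
    have hcg : ∫ z in (Set.Ioo (0 : ℝ) 1) ×ˢ Set.Ioo a b, fstar z
        ∂((volume : Measure ℝ).prod (volume : Measure ℝ)) =
        ∫ z in (Set.Ioo (0 : ℝ) 1) ×ˢ Set.Ioo a b, (fun _ : ℝ => (1:ℝ)) z.1 * h z.2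
        ∂((volume : Measure ℝ).prod (volume : Measure ℝ)) :=
      integral_congr_ae (Filter.Eventually.of_forall fun z => by
        rw [hfstar z]; simp [hhdef])
    have hpm := setIntegral_prod_mul (μ := (volume : Measure ℝ)) (ν := (volume : Measure ℝ))
      (fun _ : ℝ => (1:ℝ)) h (Set.Ioo (0:ℝ) 1) (Set.Ioo a b)
    rw [hcg.trans hpm]
    have h2 : ∫ v in Set.Ioo a b, h v = 1 := by
      rw [hhdef]
      simp only [integral_div]
      rw [← hCdef, div_self hC.ne']
    have h1 : ∫ _ in Set.Ioo (0:ℝ) 1, (1:ℝ) = 1 := by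
      simp [Real.volume_Ioo]
    rw [h1, h2, one_mul]
  refine ⟨hIntOn, hnn, hmass, ?_⟩
  -- the key computation for the jump term
  have key : ∀ v ∈ Set.Ioo a b, (fd v = ∫ w in Set.Ioo a b, k w v * fd w) →
      ∫ w, h w ∂(ell p q k volume (Set.Ioo a b) v) = h v := by
    intro v hv hstat
    have hv0 : 0 < v := lt_of_le_of_lt ha hv.1
    set g : ℝ → ℝ := fun w => p * w * v⁻¹ * k w v with hgdef
    set gN : ℝ → ℝ≥0 := fun w => (g w).toNNReal with hgNdef
    have hkvm : Measurable (fun w => k w v) :=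
      hkm.comp (measurable_id.prodMk measurable_const)
    have hgm : Measurable g :=
      ((measurable_const.mul measurable_id).mul measurable_const).mul hkvm
    have hgNm : Measurable gN := hgm.real_toNNReal
    have hdens : (fun w => ENNReal.ofReal (g w)) = fun w => ((gN w : ℝ≥0) : ℝ≥0∞) := rfl
    have hells : ell p q k volume (Set.Ioo a b) v =
        ((volume : Measure ℝ).restrict (Set.Ioo a b)).withDensity
          (fun w => ((gN w : ℝ≥0) : ℝ≥0∞)) + (ENNReal.ofReal q) • Measure.dirac v := by
      rw [ell, ← hdens, hgdef]
    -- the dirac part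
    have hδint : Integrable h ((ENNReal.ofReal q) • Measure.dirac v) := by
      refine ⟨hh_meas.aestronglyMeasurable, ?_⟩
      rw [HasFiniteIntegral, lintegral_smul_measure, lintegral_dirac]
      exact ENNReal.mul_lt_top ENNReal.ofReal_lt_top ENNReal.coe_lt_top
    have hδval : ∫ w, h w ∂((ENNReal.ofReal q) • Measure.dirac v) = q * h v := by
      rw [integral_smul_measure, integral_dirac, ENNReal.toReal_ofReal hq, smul_eq_mul]
    -- the a.e. identification of the density part
    have hFG : (fun w => gN w • h w) =ᵐ[(volume : Measure ℝ).restrict (Set.Ioo a b)]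
        fun w => (p * v⁻¹ / C) * (k w v * fd w) := by
      filter_upwards [ae_restrict_mem measurableSet_Ioo] with w hw
      have hw0 : 0 < w := lt_of_le_of_lt ha hw.1
      have hg0 : 0 ≤ g w :=
        mul_nonneg (mul_nonneg (mul_nonneg hp hw0.le) (inv_pos.2 hv0).le) (hknn w v)
      have : gN w • h w = g w * h w := by
        rw [NNReal.smul_def, Real.coe_toNNReal _ hg0, smul_eq_mul]
      rw [this, hhdef, hgdef]
      have hwne : w ≠ 0 := hw0.ne'
      field_simp
    have hwdval : ∫ w, h w ∂(((volume : Measure ℝ).restrict (Set.Ioo a b)).withDensity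
        (fun w => ((gN w : ℝ≥0) : ℝ≥0∞))) =
        ∫ w in Set.Ioo a b, gN w • h w := integral_withDensity_eq_integral_smul hgNm h
    by_cases hInt : Integrable (fun w => gN w • h w)
        ((volume : Measure ℝ).restrict (Set.Ioo a b))
    · -- integrable case
      have hρint : Integrable h (((volume : Measure ℝ).restrict (Set.Ioo a b)).withDensity
          (fun w => ((gN w : ℝ≥0) : ℝ≥0∞))) :=
        (integrable_withDensity_iff_integrable_smul hgNm).2 hInt
      rw [hells, integral_add_measure hρint hδint, hwdval, hδval,
        integral_congr_ae hFG, integral_const_mul, ← hstat]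
      rw [hhdef]
      have : p * v⁻¹ / C * fd v + q * (v⁻¹ * fd v / C) = (p + q) * (v⁻¹ * fd v / C) := by
        ring
      rw [this, hpq1, one_mul]
    · -- non-integrable case: both sides vanish
      have hcne : p * v⁻¹ / C ≠ 0 := by
        by_contra hc0
        apply hInt
        have hp0 : p = 0 := by
          have hvne : v⁻¹ ≠ 0 := (inv_pos.2 hv0).ne'
          have h' := (div_eq_zero_iff.1 hc0).resolve_right hC.ne'
          rcases mul_eq_zero.1 h' with h'' | h''
          · exact h''
          · exact absurd h'' hvne
        refine (integrable_congr hFG.symm).1 ?_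
        simp [hp0]
      have hGni : ¬ Integrable (fun w => k w v * fd w)
          ((volume : Measure ℝ).restrict (Set.Ioo a b)) := by
        intro hG
        apply hInt
        refine (integrable_congr hFG.symm).1 ?_
        exact hG.const_mul _
      have hfd0 : fd v = 0 := by
        rw [hstat, integral_undef hGni]
      have hellni : ¬ Integrable h (ell p q k volume (Set.Ioo a b) v) := by
        intro hInt'
        rw [hells] at hInt'
        exact hInt ((integrable_withDensity_iff_integrable_smul hgNm).1
          hInt'.left_of_add_measure)
      rw [integral_undef hellni, hhdef]
      simp [hfd0]
  -- conclusion
  intro t ht0 ht1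
  filter_upwards [ae_restrict_of_ae hsndst, hmemae] with z hst hmem
  rw [Tt]
  by_cases hcase : t * z.2 < z.1
  · rw [if_pos hcase, hfstar, hfstar]
  · rw [if_neg hcase]
    have hint : (fun w => fstar (1 + z.1 * w * z.2⁻¹ - t * w, w)) = h := by
      funext w
      rw [hfstar]
    rw [hint, key z.2 hmem.2 (hst hmem.2), hfstar]
end

section
/- Suppose there exists a stationary density f_⋄ for the kernel k which is strictly positive almost everywhere on V and is unique up to a.e. equality (every stationary density for k equals f_⋄ a.e.). Then for every Lebesgue-measurable set U ⊂ V with leb(U) > 0 and leb(V ∖ U) > 0 one has ∫_{V∖U} ∫_U k(w,v) dv dw > 0. -/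
open MeasureTheory Set
open scoped ENNReal

/-- A stationary density for the kernel `k` on `V = (a,b)`: a measurable
function `f : V → [0,∞)` with `∫_V f = 1` and `f(v) = ∫_V k(w,v) f(w) dw`
for almost every `v ∈ V`. -/
def IsStationaryDensity (a b : ℝ) (k : ℝ → ℝ → ℝ) (f : ℝ → ℝ) : Prop :=
  Measurable f ∧ (∀ v : ℝ, 0 ≤ f v) ∧
  (∫ v in Set.Ioo a b, f v) = 1 ∧
  ∀ᵐ v ∂((volume : Measure ℝ).restrict (Set.Ioo a b)),
    f v = ∫ w in Set.Ioo a b, k w v * f w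

theorem stmt19
    (a b : ℝ) (ha : 0 ≤ a) (hab : a < b)
    (k : ℝ → ℝ → ℝ) (hkm : Measurable (Function.uncurry k))
    (hknn : ∀ w v : ℝ, 0 ≤ k w v)
    (hk1 : ∀ w ∈ Set.Ioo a b, ∫ v in Set.Ioo a b, k w v = 1)
    (fd : ℝ → ℝ) (hfd : IsStationaryDensity a b k fd)
    (hfdpos : ∀ᵐ v ∂((volume : Measure ℝ).restrict (Set.Ioo a b)), 0 < fd v)
    (hfduniq : ∀ g : ℝ → ℝ, IsStationaryDensity a b k g →
      g =ᵐ[(volume : Measure ℝ).restrict (Set.Ioo a b)] fd) :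
    ∀ U : Set ℝ, U ⊆ Set.Ioo a b → MeasurableSet U →
      0 < volume U → 0 < volume (Set.Ioo a b \ U) →
      0 < ∫ w in Set.Ioo a b \ U, (∫ v in U, k w v) := by
  intro U hUV hU hUpos hBpos
  set V : Set ℝ := Set.Ioo a b with hVdef
  set B : Set ℝ := V \ U with hBdef
  have hVmeas : MeasurableSet V := measurableSet_Ioo
  have hBmeas : MeasurableSet B := hVmeas.diff hU
  have hBV : B ⊆ V := diff_subset
  have hUB : U ∪ B = V := union_diff_cancel hUV
  have hdisj : Disjoint U B := disjoint_sdiff_right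
  obtain ⟨hfdm, hfdnn, hfdint1, hfdstat⟩ := hfd
  -- k w is integrable on V for w ∈ V
  have hkint : ∀ w ∈ V, IntegrableOn (k w) V volume := by
    intro w hw
    by_contra h
    have h1 := hk1 w hw
    rw [integral_undef h] at h1
    exact one_ne_zero h1.symm
  -- fd is integrable on V
  have hfdint : IntegrableOn fd V volume := by
    by_contra h
    rw [integral_undef h] at hfdint1
    exact one_ne_zero hfdint1.symm
  by_contra hcon
  push_neg at hcon
  have hInn : ∀ w, 0 ≤ ∫ v in U, k w v := fun w => integral_nonneg (fun v => hknn w v)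
  have hI0 : ∫ w in B, (∫ v in U, k w v) = 0 :=
    le_antisymm hcon (integral_nonneg fun w => hInn w)
  -- measurability of inner integral
  have hImeas : StronglyMeasurable (fun w => ∫ v in U, k w v) :=
    hkm.stronglyMeasurable.integral_prod_right'
  have hBfin : IsFiniteMeasure (volume.restrict B) := by
    constructor
    rw [Measure.restrict_apply_univ]
    exact lt_of_le_of_lt (measure_mono hBV) (by simp [hVdef, Real.volume_Ioo])
  -- I = 0 a.e. on B
  have hIint : IntegrableOn (fun w => ∫ v in U, k w v) B volume := by
    refine Integrable.mono' (integrable_const 1) hImeas.aestronglyMeasurable ?_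
    filter_upwards [ae_restrict_mem hBmeas] with w hw
    rw [Real.norm_of_nonneg (hInn w)]
    calc ∫ v in U, k w v ≤ ∫ v in V, k w v :=
          setIntegral_mono_set (hkint w (hBV hw)) (ae_of_all _ fun v => hknn w v)
            (HasSubset.Subset.eventuallyLE hUV)
      _ = 1 := hk1 w (hBV hw)
  have hI0ae : ∀ᵐ w ∂(volume.restrict B), (∫ v in U, k w v) = 0 := by
    have := (integral_eq_zero_iff_of_nonneg_ae (ae_of_all _ hInn) hIint).mp hI0
    filter_upwards [this] with w hw using hw
  -- lintegral version
  have hI0ae' : ∀ᵐ w ∂(volume.restrict B), (∫⁻ v in U, ENNReal.ofReal (k w v)) = 0 := by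
    filter_upwards [hI0ae, ae_restrict_mem hBmeas] with w hw hwB
    rw [← ofReal_integral_eq_lintegral_ofReal ((hkint w (hBV hwB)).mono_set hUV)
        (ae_of_all _ fun v => hknn w v), hw, ENNReal.ofReal_zero]
  -- the flows
  set KU : ℝ → ℝ≥0∞ := fun v => ∫⁻ w in U, ENNReal.ofReal (k w v * fd w) with hKUdef
  set KB : ℝ → ℝ≥0∞ := fun v => ∫⁻ w in B, ENNReal.ofReal (k w v * fd w) with hKBdef
  have hprodmeas : Measurable (fun p : ℝ × ℝ => ENNReal.ofReal (k p.2 p.1 * fd p.2)) :=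
    ((hkm.comp measurable_swap).mul (hfdm.comp measurable_snd)).ennreal_ofReal
  have hKUmeas : Measurable KU := hprodmeas.lintegral_prod_right'
  have hKBmeas : Measurable KB := hprodmeas.lintegral_prod_right'
  -- for fixed v, w ↦ k w v * fd w is measurable
  have hslice : ∀ v : ℝ, Measurable (fun w => k w v * fd w) := by
    intro v
    exact (hkm.comp (measurable_id.prodMk measurable_const)).mul hfdm
  -- ∫⁻ v in U, KB v = 0
  have hKB_U : ∫⁻ v in U, KB v = 0 := by
    rw [lintegral_lintegral_swap (hprodmeas.aemeasurable)]
    rw [lintegral_congr_ae (g := fun _ => (0:ℝ≥0∞)) ?_, lintegral_zero]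
    filter_upwards [hI0ae'] with w hw
    have : ∀ v, ENNReal.ofReal (k w v * fd w) = ENNReal.ofReal (k w v) * ENNReal.ofReal (fd w) :=
      fun v => ENNReal.ofReal_mul (hknn w v)
    simp_rw [this]
    rw [lintegral_mul_const' _ _ ENNReal.ofReal_ne_top, hw, zero_mul]
  -- KB = 0 a.e. on U
  have hKB0 : ∀ᵐ v ∂(volume.restrict U), KB v = 0 := by
    have := (lintegral_eq_zero_iff hKBmeas).mp hKB_U
    filter_upwards [this] with v hv using hv
  -- stationarity in lintegral form
  have hstat' : ∀ᵐ v ∂(volume.restrict V), ENNReal.ofReal (fd v) = KU v + KB v := by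
    filter_upwards [hfdstat, hfdpos] with v hv hvpos
    have hint : IntegrableOn (fun w => k w v * fd w) V volume := by
      by_contra h
      rw [integral_undef h] at hv
      exact absurd hv (ne_of_gt hvpos)
    rw [hv, ofReal_integral_eq_lintegral_ofReal hint
        (ae_of_all _ fun w => mul_nonneg (hknn w v) (hfdnn w))]
    rw [← hUB, lintegral_union hBmeas hdisj]
  -- total mass of KB over V equals mass of fd over B
  have hKB_V : ∫⁻ v in V, KB v = ∫⁻ w in B, ENNReal.ofReal (fd w) := by
    rw [lintegral_lintegral_swap (hprodmeas.aemeasurable)]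
    refine lintegral_congr_ae ?_
    filter_upwards [ae_restrict_mem hBmeas] with w hw
    have : ∀ v, ENNReal.ofReal (k w v * fd w) = ENNReal.ofReal (k w v) * ENNReal.ofReal (fd w) :=
      fun v => ENNReal.ofReal_mul (hknn w v)
    simp_rw [this]
    rw [lintegral_mul_const' _ _ ENNReal.ofReal_ne_top]
    rw [← ofReal_integral_eq_lintegral_ofReal (hkint w (hBV hw))
        (ae_of_all _ fun v => hknn w v), hk1 w (hBV hw), ENNReal.ofReal_one, one_mul]
  -- mass of fd over V = 1
  have hfd_mass : ∫⁻ v in V, ENNReal.ofReal (fd v) = 1 := by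
    rw [← ofReal_integral_eq_lintegral_ofReal hfdint (ae_of_all _ hfdnn), hfdint1,
      ENNReal.ofReal_one]
  have hfdB_fin : ∫⁻ v in B, ENNReal.ofReal (fd v) ≠ ⊤ := by
    refine ne_of_lt (lt_of_le_of_lt ?_ (lt_of_le_of_lt hfd_mass.le ?_))
    · exact lintegral_mono' (Measure.restrict_mono hBV le_rfl) le_rfl
    · exact ENNReal.one_lt_top
  -- split and balance
  have hsplitB : ∫⁻ v in B, ENNReal.ofReal (fd v) = (∫⁻ v in B, KU v) + ∫⁻ v in B, KB v := by
    rw [← lintegral_add_left (hKUmeas) KB]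
    refine lintegral_congr_ae ?_
    exact ae_restrict_of_ae_restrict_of_subset hBV hstat'
  have hKBsplit : ∫⁻ v in V, KB v = (∫⁻ v in U, KB v) + ∫⁻ v in B, KB v := by
    rw [← hUB, lintegral_union hBmeas hdisj]
  have hKB_B : ∫⁻ v in B, KB v = ∫⁻ v in B, ENNReal.ofReal (fd v) := by
    rw [← hKB_V, hKBsplit, hKB_U, zero_add]
  have hKU_B : ∫⁻ v in B, KU v = 0 := by
    have h := hsplitB
    rw [hKB_B, add_comm] at h
    nth_rewrite 1 [← add_zero (∫⁻ v in B, ENNReal.ofReal (fd v))] at h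
    exact ((ENNReal.add_right_inj hfdB_fin).mp h).symm
  have hKU0 : ∀ᵐ v ∂(volume.restrict B), KU v = 0 := by
    have := (lintegral_eq_zero_iff hKUmeas).mp hKU_B
    filter_upwards [this] with v hv using hv
  -- c = ∫_U fd > 0
  set c : ℝ := ∫ v in U, fd v with hcdef
  have hfdintU : IntegrableOn fd U volume := hfdint.mono_set hUV
  have hc : 0 < c := by
    rw [hcdef, setIntegral_pos_iff_support_of_nonneg_ae (ae_of_all _ hfdnn) hfdintU]
    have hae : ∀ᵐ v ∂(volume.restrict U), v ∈ Function.support fd := by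
      filter_upwards [ae_restrict_of_ae_restrict_of_subset hUV hfdpos] with v hv
      exact ne_of_gt hv
    have hsupp : MeasurableSet (Function.support fd) :=
      hfdm (measurableSet_singleton 0).compl
    have h1 : (volume.restrict U) (Function.support fd)ᶜ = 0 := by
      have hcompl : (Function.support fd)ᶜ = {v | fd v = 0} := by
        ext x; simp [Function.support]
      rw [hcompl]
      rw [ae_iff] at hae
      simpa [Function.support] using hae
    have h2 : volume U = (volume.restrict U) (Function.support fd) := by
      have := measure_add_measure_compl (μ := volume.restrict U) hsupp
      rw [h1, add_zero, Measure.restrict_apply_univ] at this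
      exact this.symm
    rw [Measure.restrict_apply hsupp] at h2
    calc (0:ℝ≥0∞) < volume U := hUpos
      _ = volume (Function.support fd ∩ U) := h2
  -- the competitor density
  set g : ℝ → ℝ := U.indicator (fun v => fd v / c) with hgdef
  have hgm : Measurable g := (hfdm.div_const c).indicator hU
  have hgnn : ∀ v, 0 ≤ g v := by
    intro v
    exact indicator_nonneg (fun v _ => div_nonneg (hfdnn v) hc.le) v
  have hgint1 : (∫ v in V, g v) = 1 := by
    rw [hgdef, setIntegral_indicator hU, inter_eq_self_of_subset_right hUV,
      integral_div, ← hcdef, div_self (ne_of_gt hc)]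
  -- key identity: ∫_U k w v * fd w dw = (KU v).toReal
  have hKUval : ∀ v, (∫ w in U, k w v * fd w) = (KU v).toReal := by
    intro v
    rw [integral_eq_lintegral_of_nonneg_ae (ae_of_all _ fun w => mul_nonneg (hknn w v) (hfdnn w))
      (hslice v).aestronglyMeasurable]
  -- RHS of stationarity for g
  have hgRHS : ∀ v, (∫ w in V, k w v * g w) = (KU v).toReal / c := by
    intro v
    have : (fun w => k w v * g w) = U.indicator (fun w => k w v * fd w / c) := by
      funext w
      rw [hgdef]
      by_cases hw : w ∈ U
      · simp [indicator_of_mem hw, mul_div_assoc]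
      · simp [indicator_of_notMem hw]
    rw [this, setIntegral_indicator hU, inter_eq_self_of_subset_right hUV, integral_div, hKUval]
  -- stationarity of g
  have hmeq : volume.restrict V = volume.restrict U + volume.restrict B := by
    rw [← hUB]; exact Measure.restrict_union hdisj hBmeas
  have hgstat : ∀ᵐ v ∂(volume.restrict V), g v = ∫ w in V, k w v * g w := by
    have hparts : (∀ᵐ v ∂(volume.restrict U), g v = ∫ w in V, k w v * g w) ∧
        (∀ᵐ v ∂(volume.restrict B), g v = ∫ w in V, k w v * g w) := by
      constructor
      · filter_upwards [ae_restrict_mem hU, ae_restrict_of_ae_restrict_of_subset hUV hstat', hKB0]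
          with v hvU hst hkb
        rw [hgRHS v, hgdef, indicator_of_mem hvU]
        rw [hkb, add_zero] at hst
        rw [← hst, ENNReal.toReal_ofReal (hfdnn v)]
      · filter_upwards [ae_restrict_mem hBmeas, hKU0] with v hvB hku
        rw [hgRHS v, hgdef, indicator_of_notMem hvB.2, hku, ENNReal.toReal_zero, zero_div]
    have := (ae_add_measure_iff (μ := volume.restrict U) (ν := volume.restrict B)).mpr hparts
    rw [← hmeq] at this
    exact this
  have hgstation : IsStationaryDensity a b k g := ⟨hgm, hgnn, hgint1, hgstat⟩
  have huniq := hfduniq g hgstation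
  -- contradiction on B
  have hfalse : ∀ᵐ v ∂(volume.restrict B), False := by
    filter_upwards [ae_restrict_mem hBmeas,
      ae_restrict_of_ae_restrict_of_subset hBV huniq,
      ae_restrict_of_ae_restrict_of_subset hBV hfdpos] with v hvB heq hpos
    rw [hgdef, indicator_of_notMem hvB.2] at heq
    exact absurd heq.symm (ne_of_gt hpos)
  have : volume B = 0 := by
    have := hfalse
    rw [ae_iff] at this
    simpa [Measure.restrict_apply MeasurableSet.univ] using this
  exact absurd this (ne_of_gt hBpos)
end
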